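/- arXiv:1309.6915 — 8 statements merged into one kernel-verified Lean document; each statement's English description precedes it below -/
import Mathlib

section
/- Let (c_n)_{n≥1} be a sequence of positive real numbers such that there is a constant C with ∑_{m=1}^{n-1} c_m ≤ C·c_n for all n > 1. Then there exist positive constants c and δ such that c_m / c_n ≥ c · 2^{δ(m−n)} whenever m > n. -/
/-- Lemma 5.9(i): if partial sums are dominated by the current term,
the sequence grows geometrically. -/
theorem stmt_0 (c : ℕ → ℝ) (hpos : ∀ n, 1 ≤ n → 0 < c n) (C : ℝ)
    (h : ∀ n, 1 < n → ∑ m ∈ Finset.Icc 1 (n - 1), c m ≤ C * c n) :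
    ∃ c₀ > (0 : ℝ), ∃ δ > (0 : ℝ), ∀ m n : ℕ, 1 ≤ n → n < m →
      c m / c n ≥ c₀ * (2 : ℝ) ^ (δ * ((m : ℝ) - (n : ℝ))) := by
  have hC : 0 < C := by
    have h2 := h 2 (by norm_num)
    simp [Finset.Icc_self] at h2
    nlinarith [hpos 1 le_rfl, hpos 2 (by norm_num)]
  set S : ℕ → ℝ := fun n => ∑ m ∈ Finset.Icc 1 n, c m with hS
  set r : ℝ := 1 + 1 / C with hr
  have hCne : C ≠ 0 := hC.ne'
  have hr1 : 1 < r := by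
    rw [hr]
    have : 0 < 1 / C := by positivity
    linarith
  have hr0 : 0 < r := by linarith
  have hSle : ∀ n, 1 ≤ n → c n ≤ S n := by
    intro n hn
    apply Finset.single_le_sum (f := c)
    · intro i hi
      exact (hpos i (Finset.mem_Icc.mp hi).1).le
    · exact Finset.mem_Icc.mpr ⟨hn, le_rfl⟩
  have hSpos : ∀ n, 1 ≤ n → 0 < S n := fun n hn => lt_of_lt_of_le (hpos n hn) (hSle n hn)
  -- key step: c (n+1) ≥ S n / C
  have hstep : ∀ n, 1 ≤ n → S n / C ≤ c (n + 1) := by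
    intro n hn
    have hh := h (n + 1) (by omega)
    simp only [Nat.add_sub_cancel] at hh
    rw [div_le_iff₀ hC]
    linarith [hh]
  have hSsucc : ∀ n, 1 ≤ n → S (n + 1) = S n + c (n + 1) := by
    intro n hn
    exact Finset.sum_Icc_succ_top (by omega) c
  have hSgrow : ∀ n, 1 ≤ n → r * S n ≤ S (n + 1) := by
    intro n hn
    rw [hSsucc n hn]
    have := hstep n hn
    have : S n / C ≤ c (n + 1) := this
    have h1 : r * S n = S n + S n / C := by rw [hr]; field_simp
    rw [h1]
    linarith
  have hSiter : ∀ k n, 1 ≤ n → r ^ k * S n ≤ S (n + k) := by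
    intro k
    induction k with
    | zero => intro n hn; simp
    | succ k ih =>
      intro n hn
      have h1 := ih n hn
      have h2 := hSgrow (n + k) (by omega)
      calc r ^ (k + 1) * S n = r * (r ^ k * S n) := by ring
        _ ≤ r * S (n + k) := by
            apply mul_le_mul_of_nonneg_left h1 hr0.le
        _ ≤ S (n + k + 1) := h2
  -- main bound: for m > n ≥ 1, c m ≥ r^(m-n-1) * c n / C
  have hmain : ∀ m n : ℕ, 1 ≤ n → n < m → r ^ (m - n - 1) * c n / C ≤ c m := by
    intro m n hn hnm
    obtain ⟨k, rfl⟩ : ∃ k, m = n + k + 1 := ⟨m - n - 1, by omega⟩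
    have h1 : r ^ k * c n ≤ S (n + k) := by
      calc r ^ k * c n ≤ r ^ k * S n :=
            mul_le_mul_of_nonneg_left (hSle n hn) (by positivity)
        _ ≤ S (n + k) := hSiter k n hn
    have h2 := hstep (n + k) (by omega)
    have hk : n + k + 1 - n - 1 = k := by omega
    rw [hk]
    calc r ^ k * c n / C ≤ S (n + k) / C := by gcongr
      _ ≤ c (n + k + 1) := h2
  refine ⟨1 / (C * r), by positivity, Real.logb 2 r, Real.logb_pos (by norm_num) hr1, ?_⟩
  intro m n hn hnm
  have hcn := hpos n hn
  have hpow : (2 : ℝ) ^ (Real.logb 2 r * ((m : ℝ) - (n : ℝ))) = r ^ (m - n) := by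
    rw [Real.rpow_mul (by norm_num), Real.rpow_logb (by norm_num) (by norm_num) hr0]
    have : ((m : ℝ) - (n : ℝ)) = ((m - n : ℕ) : ℝ) := by
      have : n ≤ m := hnm.le
      push_cast [this]; ring
    rw [this, Real.rpow_natCast]
  rw [ge_iff_le, hpow, le_div_iff₀ hcn]
  have hmn : m - n = (m - n - 1) + 1 := by omega
  have hrne : r ≠ 0 := hr0.ne'
  calc 1 / (C * r) * r ^ (m - n) * c n
      = r ^ (m - n - 1) * c n / C := by
        rw [hmn, pow_succ, Nat.add_sub_cancel]; field_simp
    _ ≤ c m := hmain m n hn hnm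
end

section
/- Let (c_n)_{n≥1} be a sequence of positive real numbers such that ∑_{m=n+1}^∞ c_m converges and there is a constant C with ∑_{m=n+1}^∞ c_m ≤ C·c_n for every n ≥ 1. Then there exist positive constants c and δ such that c_m / c_n ≤ c · 2^{−δ(m−n)} whenever m > n. -/
/-- Lemma 5.9(ii): if tail sums are dominated by the current term,
the sequence decays geometrically. -/
theorem stmt_1 (c : ℕ → ℝ) (hpos : ∀ n, 1 ≤ n → 0 < c n) (C : ℝ)
    (hsum : Summable fun m => c (m + 1))
    (h : ∀ n, 1 ≤ n → ∑' m : ℕ, c (n + 1 + m) ≤ C * c n) :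
    ∃ c₀ > (0 : ℝ), ∃ δ > (0 : ℝ), ∀ m n : ℕ, 1 ≤ n → n < m →
      c m / c n ≤ c₀ * (2 : ℝ) ^ (-δ * ((m : ℝ) - (n : ℝ))) := by
  have hsc : Summable c := (summable_nat_add_iff 1).1 hsum
  set T : ℕ → ℝ := fun n => ∑' m : ℕ, c (n + 1 + m) with hT
  have hsT : ∀ n : ℕ, Summable fun m => c (n + 1 + m) := by
    intro n
    have := (summable_nat_add_iff (f := c) (n + 1)).2 hsc
    exact this.congr (fun m => by congr 1; omega)
  have hTpos : ∀ n, 0 < T n := by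
    intro n
    have h0 : 0 < c (n + 1 + 0) := hpos _ (by omega)
    exact h0.trans_le (Summable.le_tsum (hsT n) 0 (fun i _ => (hpos _ (by omega)).le))
  have hC : 0 < C := by
    have h1 := h 1 le_rfl
    have := hTpos 1
    nlinarith [hpos 1 le_rfl]
  set θ : ℝ := C / (C + 1) with hθdef
  have hθ0 : 0 < θ := div_pos hC (by linarith)
  have hθ1 : θ < 1 := by
    rw [div_lt_one (by linarith)]; linarith
  -- tail recursion : T n = c (n+1) + T (n+1)
  have hrec : ∀ n, T n = c (n + 1) + T (n + 1) := by
    intro n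
    rw [hT]
    simp only []
    rw [Summable.tsum_eq_zero_add (hsT n)]
    have e1 : n + 1 + 0 = n + 1 := rfl
    rw [e1]
    congr 1
    exact tsum_congr fun m => by congr 1; omega
  have hstep : ∀ n, T (n + 1) ≤ θ * T n := by
    intro n
    have h1 := h (n + 1) (by omega)
    have h2 := hrec n
    -- T (n+1) ≤ C * c (n+1), T n = c(n+1) + T(n+1)
    rw [hθdef, div_mul_eq_mul_div, le_div_iff₀ (by linarith)]
    nlinarith [hpos (n + 1) (by omega)]
  have hdecay : ∀ k n, T (n + k) ≤ θ ^ k * T n := by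
    intro k
    induction k with
    | zero => intro n; simp
    | succ k ih =>
      intro n
      have := hstep (n + k)
      calc T (n + (k + 1)) = T ((n + k) + 1) := by ring_nf
        _ ≤ θ * T (n + k) := hstep (n + k)
        _ ≤ θ * (θ ^ k * T n) := by
            exact mul_le_mul_of_nonneg_left (ih n) hθ0.le
        _ = θ ^ (k + 1) * T n := by ring
  refine ⟨C + 1, by linarith, Real.logb 2 θ⁻¹, ?_, ?_⟩
  · apply Real.logb_pos one_lt_two
    rw [lt_inv_comm₀ one_pos hθ0]; simpa using hθ1
  intro m n hn hnm
  have hcm : c m ≤ T (m - 1) := by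
    have h0 : c ((m - 1) + 1 + 0) ≤ T (m - 1) :=
      Summable.le_tsum (hsT (m - 1)) 0 (fun i _ => (hpos _ (by omega)).le)
    have : (m - 1) + 1 + 0 = m := by omega
    rwa [this] at h0
  have hTd : T (m - 1) ≤ θ ^ (m - 1 - n) * T n := by
    have := hdecay (m - 1 - n) n
    have e : n + (m - 1 - n) = m - 1 := by omega
    rwa [e] at this
  have hTn : T n ≤ C * c n := h n hn
  have hcn := hpos n hn
  have key : c m ≤ (C + 1) * θ ^ (m - n) * c n := by
    have e : (m : ℕ) - n = (m - 1 - n) + 1 := by omega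
    have hθpow : (0:ℝ) ≤ θ ^ (m - 1 - n) := pow_nonneg hθ0.le _
    have h3 : (C + 1) * θ ^ (m - n) = C * θ ^ (m - 1 - n) := by
      rw [e, pow_succ]
      field_simp [hθdef]
      have hθC : θ * (C + 1) = C := by rw [hθdef]; exact div_mul_cancel₀ C (by linarith : C + 1 ≠ 0)
      linear_combination hθC
    rw [h3]
    calc c m ≤ T (m - 1) := hcm
      _ ≤ θ ^ (m - 1 - n) * T n := hTd
      _ ≤ θ ^ (m - 1 - n) * (C * c n) :=
          mul_le_mul_of_nonneg_left hTn hθpow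
      _ = C * θ ^ (m - 1 - n) * c n := by ring
  have hrw : (2 : ℝ) ^ (-(Real.logb 2 θ⁻¹) * ((m : ℝ) - (n : ℝ))) = θ ^ (m - n) := by
    have hm : ((m : ℝ) - (n : ℝ)) = ((m - n : ℕ) : ℝ) := by
      push_cast [Nat.cast_sub hnm.le]; ring
    have hlog : -(Real.logb 2 θ⁻¹) = Real.logb 2 θ := by
      rw [Real.logb_inv]; ring
    rw [hm, hlog, Real.rpow_mul (by norm_num : (0:ℝ) ≤ 2),
      Real.rpow_logb two_pos (by norm_num) hθ0, Real.rpow_natCast]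
  rw [hrw, div_le_iff₀ hcn]
  exact key
end

section
/- Let {x_n}_{n∈N} be an exact system (complete and minimal) in a separable Hilbert space H with biorthogonal system {x̃_n}. Then {x_n} is a strong Markushevich basis (i.e., for every partition N = N₁ ∪ N₂ into disjoint sets, the mixed system {x_n : n ∈ N₁} ∪ {x̃_n : n ∈ N₂} is complete) if and only if for any h, h̃ ∈ H satisfying (h, x_n)·(x̃_n, h̃) = 0 for all n, one has (h, h̃) = 0. -/
open scoped InnerProductSpace

/-- Criterion for being a strong Markushevich basis: an exact system `x` with
biorthogonal system `xt` in a separable Hilbert space is a strong M-basis iff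
any two vectors `h, ht` with `⟪h, x n⟫ ⬝ ⟪xt n, ht⟫ = 0` for all `n` are orthogonal. -/
theorem stmt_2 {H : Type*} [NormedAddCommGroup H] [InnerProductSpace ℂ H]
    [CompleteSpace H] [TopologicalSpace.SeparableSpace H]
    (x xt : ℕ → H)
    (hbi : ∀ m n, ⟪x m, xt n⟫_ℂ = if m = n then 1 else 0)
    (hcomplete : (Submodule.span ℂ (Set.range x)).topologicalClosure = ⊤)
    (hminimal : ∀ n₀ : ℕ,
      (Submodule.span ℂ (x '' {n | n ≠ n₀})).topologicalClosure ≠ ⊤) :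
    (∀ N₁ N₂ : Set ℕ, N₁ ∪ N₂ = Set.univ → Disjoint N₁ N₂ →
        (Submodule.span ℂ (x '' N₁ ∪ xt '' N₂)).topologicalClosure = ⊤)
      ↔ (∀ h ht : H, (∀ n, ⟪h, x n⟫_ℂ * ⟪xt n, ht⟫_ℂ = 0) → ⟪h, ht⟫_ℂ = 0) := by
  constructor
  · intro hstrong h ht hz
    set N₁ : Set ℕ := {n | ⟪h, x n⟫_ℂ = 0} with hN₁def
    have htop := hstrong N₁ N₁ᶜ (Set.union_compl_self _) disjoint_compl_right
    set K := (Submodule.span ℂ (xt '' N₁ᶜ)).topologicalClosure with hKdef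
    haveI : CompleteSpace K :=
      (Submodule.span ℂ (xt '' N₁ᶜ)).isClosed_topologicalClosure.completeSpace_coe
    -- each x m, m ∈ N₁, is orthogonal to K
    have hxK : ∀ m ∈ N₁, ∀ u ∈ K, ⟪x m, u⟫_ℂ = 0 := by
      intro m hm u hu
      have hle : K ≤ (ℂ ∙ x m)ᗮ := by
        refine Submodule.topologicalClosure_minimal _ ?_ (Submodule.isClosed_orthogonal _)
        rw [Submodule.span_le]
        rintro _ ⟨n, hn, rfl⟩
        rw [SetLike.mem_coe, Submodule.mem_orthogonal_singleton_iff_inner_right, hbi]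
        simp only [ite_eq_right_iff]
        intro hmn; exact absurd (hmn ▸ hm) hn
      exact Submodule.mem_orthogonal_singleton_iff_inner_right.mp (hle hu)
    -- ht is orthogonal to K
    have hhtK : ∀ u ∈ K, ⟪u, ht⟫_ℂ = 0 := by
      intro u hu
      have hle : K ≤ (ℂ ∙ ht)ᗮ := by
        refine Submodule.topologicalClosure_minimal _ ?_ (Submodule.isClosed_orthogonal _)
        rw [Submodule.span_le]
        rintro _ ⟨n, hn, rfl⟩
        rw [SetLike.mem_coe, Submodule.mem_orthogonal_singleton_iff_inner_left]
        rcases mul_eq_zero.mp (hz n) with h0 | h0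
        · exact absurd h0 hn
        · exact h0
      exact Submodule.mem_orthogonal_singleton_iff_inner_left.mp (hle hu)
    -- h ∈ K
    have hhK : h ∈ K := by
      set w : H := h - (K.orthogonalProjectionOnto h : H) with hwdef
      have hw : w ∈ (Submodule.span ℂ (x '' N₁ ∪ xt '' N₁ᶜ))ᗮ := by
        rw [Submodule.mem_orthogonal]
        intro u hu
        induction hu using Submodule.span_induction with
        | mem v hv =>
          rcases hv with ⟨m, hm, rfl⟩ | ⟨n, hn, rfl⟩
          · rw [hwdef, inner_sub_right]
            have h0 : ⟪h, x m⟫_ℂ = 0 := hm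
            have h1 : ⟪x m, h⟫_ℂ = 0 := by
              rw [← inner_conj_symm, h0, map_zero]
            have h2 : ⟪x m, (K.orthogonalProjectionOnto h : H)⟫_ℂ = 0 :=
              hxK m hm _ (K.orthogonalProjectionOnto h).2
            rw [h1, h2, sub_zero]
          · have hmem : xt n ∈ K :=
              Submodule.le_topologicalClosure _
                (Submodule.subset_span ⟨n, hn, rfl⟩)
            exact (Submodule.mem_orthogonal K w).mp
              (Submodule.sub_starProjection_mem_orthogonal (K := K) h) _ hmem
        | zero => exact inner_zero_left _
        | add v₁ v₂ _ _ h1 h2 => rw [inner_add_left, h1, h2, add_zero]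
        | smul c v _ h1 => rw [inner_smul_left, h1, mul_zero]
      rw [Submodule.topologicalClosure_eq_top_iff] at htop
      rw [htop, Submodule.mem_bot] at hw
      have heq : h = (K.orthogonalProjectionOnto h : H) := sub_eq_zero.mp hw
      rw [heq]; exact (K.orthogonalProjectionOnto h).2
    exact hhtK h hhK
  · intro hcrit N₁ N₂ hun hdis
    rw [Submodule.topologicalClosure_eq_top_iff]
    rw [Submodule.eq_bot_iff]
    intro v hv
    rw [Submodule.mem_orthogonal] at hv
    have key : ∀ n, ⟪v, x n⟫_ℂ * ⟪xt n, v⟫_ℂ = 0 := by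
      intro n
      have hn : n ∈ N₁ ∪ N₂ := hun ▸ Set.mem_univ n
      rcases hn with hn | hn
      · have : ⟪x n, v⟫_ℂ = 0 :=
          hv _ (Submodule.subset_span (Set.mem_union_left _ ⟨n, hn, rfl⟩))
        rw [← inner_conj_symm, this, map_zero, zero_mul]
      · have : ⟪xt n, v⟫_ℂ = 0 :=
          hv _ (Submodule.subset_span (Set.mem_union_right _ ⟨n, hn, rfl⟩))
        rw [this, mul_zero]
    have := hcrit v v key
    exact inner_self_eq_zero.mp this
end

section
/- Suppose (t_n) is a positive lacunary sequence (t_{n+1}/t_n ≥ q > 1) and (μ_n) positive weights satisfying: there is C > 0 with μ_n ≤ C·2^{−δ(m−n)} μ_m and μ_m/t_m² ≤ C·2^{−δ(m−n)}·μ_n/t_n² for all m > n and some δ > 0. Then for every sequence (a_n) ∈ ℓ², one has ∑_n (1/μ_n)(∑_{k<n} |a_k| μ_k^{1/2})² ≤ C' ∑_n |a_n|² for a constant C' depending only on C, δ. -/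
/-- Weighted Hardy-type inequality under exponential growth of the weights. -/
theorem stmt_10 (t μ : ℕ → ℝ) (q : ℝ) (hq : 1 < q)
    (htpos : ∀ n, 0 < t n) (hlac : ∀ n, q * t n ≤ t (n + 1))
    (hμpos : ∀ n, 0 < μ n) (C δ : ℝ) (hC : 0 < C) (hδ : 0 < δ)
    (hgrow : ∀ m n : ℕ, n < m →
      μ n ≤ C * (2 : ℝ) ^ (-δ * ((m : ℝ) - (n : ℝ))) * μ m)
    (hdecay : ∀ m n : ℕ, n < m →
      μ m / t m ^ 2 ≤ C * (2 : ℝ) ^ (-δ * ((m : ℝ) - (n : ℝ))) * (μ n / t n ^ 2)) :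
    ∃ C' : ℝ, 0 < C' ∧ ∀ a : ℕ → ℝ, (Summable fun n => a n ^ 2) →
      ∀ N : ℕ, ∑ n ∈ Finset.range N,
          (1 / μ n) * (∑ k ∈ Finset.range n, |a k| * Real.sqrt (μ k)) ^ 2
        ≤ C' * ∑' n, a n ^ 2 := by
  set r : ℝ := (2 : ℝ) ^ (-δ) with hrdef
  have hr0 : 0 < r := Real.rpow_pos_of_pos two_pos _
  have hr1 : r < 1 := Real.rpow_lt_one_of_one_lt_of_neg one_lt_two (by linarith)
  set s : ℝ := Real.sqrt r with hsdef
  have hs0 : 0 < s := Real.sqrt_pos.mpr hr0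
  have hs1 : s < 1 := by
    have : Real.sqrt r < Real.sqrt 1 := Real.sqrt_lt_sqrt hr0.le hr1
    simpa using this
  have hss : s * s = r := Real.mul_self_sqrt hr0.le
  set M : ℝ := s / (1 - s) with hMdef
  have hM0 : 0 < M := div_pos hs0 (by linarith)
  -- geometric sum bound
  have geom : ∀ m : ℕ, ∑ j ∈ Finset.range m, s ^ (j + 1) ≤ M := by
    intro m
    have hgs := geom_sum_mul s m
    have hS : (∑ j ∈ Finset.range m, s ^ j) * (1 - s) = 1 - s ^ m := by
      linear_combination -hgs
    have hSle : (∑ j ∈ Finset.range m, s ^ j) ≤ 1 / (1 - s) := by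
      rw [le_div_iff₀ (by linarith : (0:ℝ) < 1 - s), hS]
      have : (0:ℝ) ≤ s ^ m := pow_nonneg hs0.le _
      linarith
    calc ∑ j ∈ Finset.range m, s ^ (j + 1)
        = s * ∑ j ∈ Finset.range m, s ^ j := by
          rw [Finset.mul_sum]
          exact Finset.sum_congr rfl fun j _ => by ring
      _ ≤ s * (1 / (1 - s)) := by
          exact mul_le_mul_of_nonneg_left hSle hs0.le
      _ = M := by rw [hMdef]; ring
  -- s^(n-k) squared is r^(n-k)
  have hsr : ∀ j : ℕ, (s ^ j) ^ 2 = r ^ j := by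
    intro j
    rw [← pow_mul, mul_comm j 2, pow_mul, sq, hss]
  refine ⟨C * M * M, by positivity, ?_⟩
  intro a ha N
  -- pointwise bound on sqrt μ
  have key : ∀ n k : ℕ, k < n →
      Real.sqrt (μ k) ≤ Real.sqrt C * s ^ (n - k) * Real.sqrt (μ n) := by
    intro n k hk
    have h1 := hgrow n k hk
    have hcast : (n : ℝ) - (k : ℝ) = ((n - k : ℕ) : ℝ) := by
      rw [Nat.cast_sub hk.le]
    have h2 : (2 : ℝ) ^ (-δ * ((n : ℝ) - (k : ℝ))) = r ^ (n - k) := by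
      rw [hcast, hrdef, ← Real.rpow_natCast ((2:ℝ) ^ (-δ)) (n - k),
        ← Real.rpow_mul (by norm_num : (0:ℝ) ≤ 2)]
    rw [h2] at h1
    have h3 : Real.sqrt (μ k) ≤ Real.sqrt (C * r ^ (n - k) * μ n) :=
      Real.sqrt_le_sqrt h1
    have h4 : Real.sqrt (C * r ^ (n - k) * μ n)
        = Real.sqrt C * s ^ (n - k) * Real.sqrt (μ n) := by
      rw [Real.sqrt_mul (by positivity), Real.sqrt_mul hC.le]
      congr 1
      congr 1
      rw [← hsr (n - k), Real.sqrt_sq (pow_nonneg hs0.le _)]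
    rw [h4] at h3
    exact h3
  -- per-n estimate
  have main : ∀ n : ℕ,
      (1 / μ n) * (∑ k ∈ Finset.range n, |a k| * Real.sqrt (μ k)) ^ 2
        ≤ C * M * ∑ k ∈ Finset.range n, a k ^ 2 * s ^ (n - k) := by
    intro n
    set T : ℝ := ∑ k ∈ Finset.range n, |a k| * s ^ (n - k) with hTdef
    have hT0 : 0 ≤ T := Finset.sum_nonneg fun k _ => by positivity
    have step1 : ∑ k ∈ Finset.range n, |a k| * Real.sqrt (μ k)
        ≤ Real.sqrt C * Real.sqrt (μ n) * T := by
      rw [hTdef, Finset.mul_sum]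
      apply Finset.sum_le_sum
      intro k hk
      have hk' : k < n := Finset.mem_range.mp hk
      have := key n k hk'
      have habs : 0 ≤ |a k| := abs_nonneg _
      calc |a k| * Real.sqrt (μ k)
          ≤ |a k| * (Real.sqrt C * s ^ (n - k) * Real.sqrt (μ n)) :=
            mul_le_mul_of_nonneg_left this habs
        _ = Real.sqrt C * Real.sqrt (μ n) * (|a k| * s ^ (n - k)) := by ring
    have hLHSnn : 0 ≤ ∑ k ∈ Finset.range n, |a k| * Real.sqrt (μ k) :=
      Finset.sum_nonneg fun k _ => by positivity
    have step2 : (∑ k ∈ Finset.range n, |a k| * Real.sqrt (μ k)) ^ 2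
        ≤ (Real.sqrt C * Real.sqrt (μ n) * T) ^ 2 := by
      apply sq_le_sq' _ step1
      nlinarith
    have hsqC : Real.sqrt C ^ 2 = C := Real.sq_sqrt hC.le
    have hsqμ : Real.sqrt (μ n) ^ 2 = μ n := Real.sq_sqrt (hμpos n).le
    have step3 : (1 / μ n) * (Real.sqrt C * Real.sqrt (μ n) * T) ^ 2 = C * T ^ 2 := by
      have hexp : (Real.sqrt C * Real.sqrt (μ n) * T) ^ 2
          = Real.sqrt C ^ 2 * Real.sqrt (μ n) ^ 2 * T ^ 2 := by ring
      rw [hexp, hsqC, hsqμ]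
      have hne : μ n ≠ 0 := (hμpos n).ne'
      field_simp
    -- Cauchy-Schwarz on T
    have csT : T ^ 2 ≤ M * ∑ k ∈ Finset.range n, a k ^ 2 * s ^ (n - k) := by
      have hcs := Finset.sum_mul_sq_le_sq_mul_sq (Finset.range n)
        (fun k => Real.sqrt (s ^ (n - k)))
        (fun k => Real.sqrt (s ^ (n - k)) * |a k|)
      have hT' : T = ∑ k ∈ Finset.range n,
          Real.sqrt (s ^ (n - k)) * (Real.sqrt (s ^ (n - k)) * |a k|) := by
        rw [hTdef]
        apply Finset.sum_congr rfl
        intro k _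
        rw [← mul_assoc, Real.mul_self_sqrt (pow_nonneg hs0.le _)]
        ring
      have hf2 : ∀ k ∈ Finset.range n, (Real.sqrt (s ^ (n - k))) ^ 2 = s ^ (n - k) :=
        fun k _ => Real.sq_sqrt (pow_nonneg hs0.le _)
      have hg2 : ∀ k ∈ Finset.range n,
          (Real.sqrt (s ^ (n - k)) * |a k|) ^ 2 = a k ^ 2 * s ^ (n - k) := by
        intro k _
        rw [mul_pow, Real.sq_sqrt (pow_nonneg hs0.le _), sq_abs]
        ring
      rw [hT']
      calc (∑ k ∈ Finset.range n,
            Real.sqrt (s ^ (n - k)) * (Real.sqrt (s ^ (n - k)) * |a k|)) ^ 2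
          ≤ (∑ k ∈ Finset.range n, (Real.sqrt (s ^ (n - k))) ^ 2) *
            ∑ k ∈ Finset.range n, (Real.sqrt (s ^ (n - k)) * |a k|) ^ 2 := hcs
        _ = (∑ k ∈ Finset.range n, s ^ (n - k)) *
            ∑ k ∈ Finset.range n, a k ^ 2 * s ^ (n - k) := by
            rw [Finset.sum_congr rfl hf2, Finset.sum_congr rfl hg2]
        _ ≤ M * ∑ k ∈ Finset.range n, a k ^ 2 * s ^ (n - k) := by
            apply mul_le_mul_of_nonneg_right _ (Finset.sum_nonneg fun k _ =>
              mul_nonneg (sq_nonneg _) (pow_nonneg hs0.le _))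
            rw [← Finset.sum_range_reflect]
            calc ∑ k ∈ Finset.range n, s ^ (n - (n - 1 - k))
                = ∑ k ∈ Finset.range n, s ^ (k + 1) := by
                  apply Finset.sum_congr rfl
                  intro k hk
                  have := Finset.mem_range.mp hk
                  congr 1
                  omega
              _ ≤ M := geom n
    calc (1 / μ n) * (∑ k ∈ Finset.range n, |a k| * Real.sqrt (μ k)) ^ 2
        ≤ (1 / μ n) * (Real.sqrt C * Real.sqrt (μ n) * T) ^ 2 := by
          have := hμpos n
          apply mul_le_mul_of_nonneg_left step2 (by positivity)
      _ = C * T ^ 2 := step3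
      _ ≤ C * (M * ∑ k ∈ Finset.range n, a k ^ 2 * s ^ (n - k)) :=
          mul_le_mul_of_nonneg_left csT hC.le
      _ = C * M * ∑ k ∈ Finset.range n, a k ^ 2 * s ^ (n - k) := by ring
  -- sum over n and swap
  have swap : ∑ n ∈ Finset.range N, ∑ k ∈ Finset.range n, a k ^ 2 * s ^ (n - k)
      ≤ M * ∑ k ∈ Finset.range N, a k ^ 2 := by
    have hext : ∀ n ∈ Finset.range N,
        ∑ k ∈ Finset.range n, a k ^ 2 * s ^ (n - k)
          = ∑ k ∈ Finset.range N, if k < n then a k ^ 2 * s ^ (n - k) else 0 := by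
      intro n hn
      have hnN : n ≤ N := (Finset.mem_range.mp hn).le
      rw [eq_comm, ← Finset.sum_subset (Finset.range_subset_range.mpr hnN)]
      · apply Finset.sum_congr rfl
        intro k hk
        rw [if_pos (Finset.mem_range.mp hk)]
      · intro x _ hx
        rw [if_neg (by simpa using hx)]
    rw [Finset.sum_congr rfl hext, Finset.sum_comm]
    have inner : ∀ k, ∑ n ∈ Finset.range N, (if k < n then a k ^ 2 * s ^ (n - k) else 0)
        ≤ a k ^ 2 * M := by
      intro k
      have : ∑ n ∈ Finset.range N, (if k < n then a k ^ 2 * s ^ (n - k) else 0)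
          = a k ^ 2 * ∑ n ∈ Finset.range N, (if k < n then s ^ (n - k) else 0) := by
        rw [Finset.mul_sum]
        apply Finset.sum_congr rfl
        intro n _
        split <;> ring
      rw [this]
      apply mul_le_mul_of_nonneg_left _ (sq_nonneg _)
      rw [Finset.sum_ite, Finset.sum_const_zero, add_zero]
      have hfe : Finset.filter (fun n => k < n) (Finset.range N) = Finset.Ico (k + 1) N := by
        ext x
        simp [Finset.mem_filter, Finset.mem_range, Finset.mem_Ico]
        omega
      rw [hfe, Finset.sum_Ico_eq_sum_range]
      calc ∑ j ∈ Finset.range (N - (k + 1)), s ^ (k + 1 + j - k)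
          = ∑ j ∈ Finset.range (N - (k + 1)), s ^ (j + 1) := by
            apply Finset.sum_congr rfl
            intro j _
            congr 1
            omega
        _ ≤ M := geom _
    calc ∑ k ∈ Finset.range N, ∑ n ∈ Finset.range N,
          (if k < n then a k ^ 2 * s ^ (n - k) else 0)
        ≤ ∑ k ∈ Finset.range N, a k ^ 2 * M := Finset.sum_le_sum fun k _ => inner k
      _ = M * ∑ k ∈ Finset.range N, a k ^ 2 := by rw [Finset.mul_sum]; apply Finset.sum_congr rfl; intros; ring
  have htail : ∑ k ∈ Finset.range N, a k ^ 2 ≤ ∑' n, a n ^ 2 :=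
    Summable.sum_le_tsum _ (fun k _ => sq_nonneg _) ha
  calc ∑ n ∈ Finset.range N,
        (1 / μ n) * (∑ k ∈ Finset.range n, |a k| * Real.sqrt (μ k)) ^ 2
      ≤ ∑ n ∈ Finset.range N, C * M * ∑ k ∈ Finset.range n, a k ^ 2 * s ^ (n - k) :=
        Finset.sum_le_sum fun n _ => main n
    _ = C * M * ∑ n ∈ Finset.range N, ∑ k ∈ Finset.range n, a k ^ 2 * s ^ (n - k) := by
        rw [Finset.mul_sum]
    _ ≤ C * M * (M * ∑ k ∈ Finset.range N, a k ^ 2) :=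
        mul_le_mul_of_nonneg_left swap (by positivity)
    _ = C * M * M * ∑ k ∈ Finset.range N, a k ^ 2 := by ring
    _ ≤ C * M * M * ∑' n, a n ^ 2 :=
        mul_le_mul_of_nonneg_left htail (by positivity)
end

section
/- Suppose (t_n) is a positive lacunary sequence and (μ_n) positive weights such that μ_m/t_m² ≤ C·2^{−δ(m−n)}·μ_n/t_n² for all m > n. Then for every (a_n) ∈ ℓ², ∑_n (t_n²/μ_n)(∑_{k>n} |a_k| μ_k^{1/2}/t_k)² ≤ C' ∑_n |a_n|² for a constant C' depending only on C, δ. -/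
/-- Cauchy–Schwarz for tsums of nonnegative reals. -/
lemma tsum_cs (f g : ℕ → ℝ) (hf : ∀ k, 0 ≤ f k) (hg : ∀ k, 0 ≤ g k)
    (hf2 : Summable fun k => f k ^ 2) (hg2 : Summable fun k => g k ^ 2) :
    (∑' k, f k * g k) ^ 2 ≤ (∑' k, f k ^ 2) * (∑' k, g k ^ 2) := by
  have hfg : Summable fun k => f k * g k := by
    apply Summable.of_nonneg_of_le (fun k => mul_nonneg (hf k) (hg k))
      (fun k => ?_) (hf2.add hg2)
    nlinarith [sq_nonneg (f k - g k), sq_nonneg (f k + g k)]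
  have hA : 0 ≤ ∑' k, f k ^ 2 := tsum_nonneg fun k => sq_nonneg _
  have hB : 0 ≤ ∑' k, g k ^ 2 := tsum_nonneg fun k => sq_nonneg _
  have h1 : ∑' k, f k * g k ≤ Real.sqrt ((∑' k, f k ^ 2) * (∑' k, g k ^ 2)) := by
    apply Summable.tsum_le_of_sum_le hfg
    intro s
    have h2 := Finset.sum_mul_sq_le_sq_mul_sq s f g
    have h3 : (∑ i ∈ s, f i ^ 2) * (∑ i ∈ s, g i ^ 2)
        ≤ (∑' k, f k ^ 2) * (∑' k, g k ^ 2) := by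
      apply mul_le_mul (Summable.sum_le_tsum s (fun i _ => sq_nonneg _) hf2)
        (Summable.sum_le_tsum s (fun i _ => sq_nonneg _) hg2)
        (Finset.sum_nonneg fun i _ => sq_nonneg _) hA
    have h4 : (∑ i ∈ s, f i * g i) ^ 2 ≤ (∑' k, f k ^ 2) * (∑' k, g k ^ 2) := h2.trans h3
    calc ∑ i ∈ s, f i * g i ≤ |∑ i ∈ s, f i * g i| := le_abs_self _
      _ = Real.sqrt ((∑ i ∈ s, f i * g i) ^ 2) := (Real.sqrt_sq_eq_abs _).symm
      _ ≤ _ := Real.sqrt_le_sqrt h4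
  calc (∑' k, f k * g k) ^ 2 ≤ Real.sqrt ((∑' k, f k ^ 2) * (∑' k, g k ^ 2)) ^ 2 := by
        apply pow_le_pow_left₀ (tsum_nonneg fun k => mul_nonneg (hf k) (hg k)) h1
    _ = _ := Real.sq_sqrt (mul_nonneg hA hB)

/-- Dual weighted Hardy-type inequality under exponential decay of `μ_n / t_n²`. -/
theorem stmt_11 (t μ : ℕ → ℝ) (q : ℝ) (hq : 1 < q)
    (htpos : ∀ n, 0 < t n) (hlac : ∀ n, q * t n ≤ t (n + 1))
    (hμpos : ∀ n, 0 < μ n) (C δ : ℝ) (hC : 0 < C) (hδ : 0 < δ)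
    (hdecay : ∀ m n : ℕ, n < m →
      μ m / t m ^ 2 ≤ C * (2 : ℝ) ^ (-δ * ((m : ℝ) - (n : ℝ))) * (μ n / t n ^ 2)) :
    ∃ C' : ℝ, 0 < C' ∧ ∀ a : ℕ → ℝ, (Summable fun n => a n ^ 2) →
      ∀ N : ℕ, ∑ n ∈ Finset.range N,
          (t n ^ 2 / μ n) *
            (∑' k : ℕ, |a (n + 1 + k)| * Real.sqrt (μ (n + 1 + k)) / t (n + 1 + k)) ^ 2
        ≤ C' * ∑' n, a n ^ 2 := by
  set ρ : ℝ := (2 : ℝ) ^ (-δ / 2) with hρdef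
  have hρpos : 0 < ρ := Real.rpow_pos_of_pos (by norm_num) _
  have hρlt : ρ < 1 := by
    have : (-δ / 2) < 0 := by linarith
    calc ρ < (2:ℝ) ^ (0:ℝ) := Real.rpow_lt_rpow_of_exponent_lt (by norm_num) this
      _ = 1 := Real.rpow_zero 2
  set K : ℝ := ρ / (1 - ρ) with hKdef
  have hKpos : 0 < K := div_pos hρpos (by linarith)
  -- geometric series
  have hgeo : Summable fun k : ℕ => ρ ^ (k + 1) := by
    apply Summable.comp_injective (summable_geometric_of_lt_one hρpos.le hρlt)
      (add_left_injective 1)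
  have hgeosum : (∑' k : ℕ, ρ ^ (k + 1)) = K := by
    have : (fun k : ℕ => ρ ^ (k + 1)) = fun k : ℕ => ρ ^ k * ρ := by
      funext k; rw [pow_succ]
    rw [this, tsum_mul_right, tsum_geometric_of_lt_one hρpos.le hρlt, hKdef,
      div_eq_mul_inv, mul_comm]
  -- key pointwise bound
  have hkey : ∀ n k : ℕ, Real.sqrt (μ (n + 1 + k)) / t (n + 1 + k)
      ≤ Real.sqrt C * ρ ^ (k + 1) * (Real.sqrt (μ n) / t n) := by
    intro n k
    have hlt : n < n + 1 + k := by omega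
    have h := hdecay (n + 1 + k) n hlt
    have hcast : ((n + 1 + k : ℕ) : ℝ) - (n : ℝ) = (k : ℝ) + 1 := by
      push_cast; ring
    rw [hcast] at h
    have h2 : Real.sqrt (μ (n + 1 + k) / t (n + 1 + k) ^ 2)
        ≤ Real.sqrt (C * (2 : ℝ) ^ (-δ * ((k : ℝ) + 1)) * (μ n / t n ^ 2)) :=
      Real.sqrt_le_sqrt h
    have e1 : ∀ m : ℕ, Real.sqrt (μ m / t m ^ 2) = Real.sqrt (μ m) / t m := by
      intro m
      rw [Real.sqrt_div (hμpos m).le, Real.sqrt_sq (htpos m).le]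
    have e2 : Real.sqrt ((2 : ℝ) ^ (-δ * ((k : ℝ) + 1))) = ρ ^ (k + 1) := by
      rw [Real.sqrt_eq_rpow, ← Real.rpow_natCast ρ (k + 1), hρdef,
        ← Real.rpow_mul (by norm_num), ← Real.rpow_mul (by norm_num)]
      push_cast
      ring_nf
    calc Real.sqrt (μ (n + 1 + k)) / t (n + 1 + k)
        = Real.sqrt (μ (n + 1 + k) / t (n + 1 + k) ^ 2) := (e1 _).symm
      _ ≤ Real.sqrt (C * (2 : ℝ) ^ (-δ * ((k : ℝ) + 1)) * (μ n / t n ^ 2)) := h2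
      _ = Real.sqrt C * ρ ^ (k + 1) * (Real.sqrt (μ n) / t n) := by
          rw [Real.sqrt_mul (by positivity), Real.sqrt_mul hC.le, e2, e1]
  refine ⟨C * K * K, by positivity, fun a ha N => ?_⟩
  set b : ℕ → ℝ := fun n => |a n| with hbdef
  have hb2 : (fun n => b n ^ 2) = fun n => a n ^ 2 := by
    funext n; rw [hbdef, sq_abs]
  have hbsum : Summable fun n => b n ^ 2 := by rw [hb2]; exact ha
  set A : ℝ := ∑' n, a n ^ 2 with hAdef
  have hA2 : (∑' n, b n ^ 2) = A := by rw [hb2]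
  have hAnn : 0 ≤ A := tsum_nonneg fun n => sq_nonneg _
  have hbound : ∀ j, b j ≤ Real.sqrt A := by
    intro j
    have : b j ^ 2 ≤ A := by
      rw [← hA2]; exact Summable.le_tsum hbsum j fun i _ => sq_nonneg _
    calc b j = Real.sqrt (b j ^ 2) := by rw [Real.sqrt_sq (abs_nonneg _)]
      _ ≤ Real.sqrt A := Real.sqrt_le_sqrt this
  -- the weighted tails
  set S : ℕ → ℝ := fun n => ∑' k : ℕ, ρ ^ (k + 1) * b (n + 1 + k) with hSdef
  set U : ℕ → ℝ := fun n => ∑' k : ℕ, ρ ^ (k + 1) * b (n + 1 + k) ^ 2 with hUdef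
  have hSsumm : ∀ n, Summable fun k : ℕ => ρ ^ (k + 1) * b (n + 1 + k) := by
    intro n
    apply Summable.of_nonneg_of_le
      (fun k => mul_nonneg (by positivity) (abs_nonneg _))
      (fun k => mul_le_mul_of_nonneg_left (hbound _) (by positivity))
      (hgeo.mul_right _)
  have hUsumm : ∀ n, Summable fun k : ℕ => ρ ^ (k + 1) * b (n + 1 + k) ^ 2 := by
    intro n
    apply Summable.of_nonneg_of_le
      (fun k => mul_nonneg (by positivity) (sq_nonneg _))
      (fun k => ?_) (hgeo.mul_right A)
    have : b (n + 1 + k) ^ 2 ≤ A := by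
      rw [← hA2]; exact Summable.le_tsum hbsum _ fun i _ => sq_nonneg _
    exact mul_le_mul_of_nonneg_left this (by positivity)
  -- step 1: the inner tsum is bounded
  have hinner : ∀ n, (∑' k : ℕ, |a (n + 1 + k)| * Real.sqrt (μ (n + 1 + k)) / t (n + 1 + k))
      ≤ Real.sqrt C * (Real.sqrt (μ n) / t n) * S n := by
    intro n
    have hterm : ∀ k, |a (n + 1 + k)| * Real.sqrt (μ (n + 1 + k)) / t (n + 1 + k)
        ≤ Real.sqrt C * (Real.sqrt (μ n) / t n) * (ρ ^ (k + 1) * b (n + 1 + k)) := by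
      intro k
      have := hkey n k
      have hb' : 0 ≤ b (n + 1 + k) := abs_nonneg _
      calc |a (n + 1 + k)| * Real.sqrt (μ (n + 1 + k)) / t (n + 1 + k)
          = b (n + 1 + k) * (Real.sqrt (μ (n + 1 + k)) / t (n + 1 + k)) := by
            rw [hbdef]; ring
        _ ≤ b (n + 1 + k) * (Real.sqrt C * ρ ^ (k + 1) * (Real.sqrt (μ n) / t n)) :=
            mul_le_mul_of_nonneg_left this hb'
        _ = Real.sqrt C * (Real.sqrt (μ n) / t n) * (ρ ^ (k + 1) * b (n + 1 + k)) := by ring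
    have hsum1 : Summable fun k : ℕ =>
        |a (n + 1 + k)| * Real.sqrt (μ (n + 1 + k)) / t (n + 1 + k) := by
      apply Summable.of_nonneg_of_le (fun k => ?_) hterm ((hSsumm n).mul_left _)
      have := (htpos (n + 1 + k)).le
      positivity
    calc (∑' k : ℕ, |a (n + 1 + k)| * Real.sqrt (μ (n + 1 + k)) / t (n + 1 + k))
        ≤ ∑' k : ℕ, Real.sqrt C * (Real.sqrt (μ n) / t n) * (ρ ^ (k + 1) * b (n + 1 + k)) :=
          Summable.tsum_le_tsum hterm hsum1 ((hSsumm n).mul_left _)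
      _ = Real.sqrt C * (Real.sqrt (μ n) / t n) * S n := tsum_mul_left
  -- step 2: Cauchy–Schwarz on S
  have hCS : ∀ n, S n ^ 2 ≤ K * U n := by
    intro n
    have := tsum_cs (fun k => Real.sqrt ρ ^ (k + 1))
      (fun k => Real.sqrt ρ ^ (k + 1) * b (n + 1 + k))
      (fun k => by positivity)
      (fun k => mul_nonneg (by positivity) (abs_nonneg _)) ?_ ?_
    · have e1 : ∀ k : ℕ, Real.sqrt ρ ^ (k + 1) * (Real.sqrt ρ ^ (k + 1) * b (n + 1 + k))
          = ρ ^ (k + 1) * b (n + 1 + k) := by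
        intro k
        rw [← mul_assoc, ← mul_pow, Real.mul_self_sqrt hρpos.le]
      have e2 : ∀ k : ℕ, (Real.sqrt ρ ^ (k + 1)) ^ 2 = ρ ^ (k + 1) := by
        intro k; rw [← pow_mul, mul_comm (k+1) 2, pow_mul, Real.sq_sqrt hρpos.le]
      have e3 : ∀ k : ℕ, (Real.sqrt ρ ^ (k + 1) * b (n + 1 + k)) ^ 2
          = ρ ^ (k + 1) * b (n + 1 + k) ^ 2 := by
        intro k; rw [mul_pow, e2]
      simp only [e1, e2, e3] at this
      calc S n ^ 2 ≤ (∑' k : ℕ, ρ ^ (k + 1)) * U n := this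
        _ = K * U n := by rw [hgeosum]
    · simpa only [fun k : ℕ => (by rw [← pow_mul, mul_comm (k+1) 2, pow_mul,
        Real.sq_sqrt hρpos.le] : (Real.sqrt ρ ^ (k + 1)) ^ 2 = ρ ^ (k + 1))] using hgeo
    · have e3 : ∀ k : ℕ, (Real.sqrt ρ ^ (k + 1) * b (n + 1 + k)) ^ 2
          = ρ ^ (k + 1) * b (n + 1 + k) ^ 2 := by
        intro k
        rw [mul_pow, ← pow_mul, mul_comm (k+1) 2, pow_mul, Real.sq_sqrt hρpos.le]
      simpa only [e3] using hUsumm n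
  -- step 3: per-term bound
  have hterm : ∀ n, (t n ^ 2 / μ n) *
      (∑' k : ℕ, |a (n + 1 + k)| * Real.sqrt (μ (n + 1 + k)) / t (n + 1 + k)) ^ 2
      ≤ C * K * U n := by
    intro n
    have hT0 : 0 ≤ ∑' k : ℕ, |a (n + 1 + k)| * Real.sqrt (μ (n + 1 + k)) / t (n + 1 + k) := by
      apply tsum_nonneg; intro k
      have := (htpos (n + 1 + k)).le
      positivity
    have hS0 : 0 ≤ S n := tsum_nonneg fun k => mul_nonneg (by positivity) (abs_nonneg _)
    have h1 : (∑' k : ℕ, |a (n + 1 + k)| * Real.sqrt (μ (n + 1 + k)) / t (n + 1 + k)) ^ 2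
        ≤ (Real.sqrt C * (Real.sqrt (μ n) / t n)) ^ 2 * S n ^ 2 := by
      rw [← mul_pow]
      exact pow_le_pow_left₀ hT0 (hinner n) 2
    have e : (Real.sqrt C * (Real.sqrt (μ n) / t n)) ^ 2 = C * (μ n / t n ^ 2) := by
      rw [mul_pow, div_pow, Real.sq_sqrt hC.le, Real.sq_sqrt (hμpos n).le]
    rw [e] at h1
    calc (t n ^ 2 / μ n) *
        (∑' k : ℕ, |a (n + 1 + k)| * Real.sqrt (μ (n + 1 + k)) / t (n + 1 + k)) ^ 2
        ≤ (t n ^ 2 / μ n) * (C * (μ n / t n ^ 2) * S n ^ 2) := by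
          exact mul_le_mul_of_nonneg_left h1 (div_nonneg (sq_nonneg _) (hμpos n).le)
      _ = C * S n ^ 2 := by
          have ht := (htpos n).ne'
          have hμ := (hμpos n).ne'
          field_simp
      _ ≤ C * (K * U n) := mul_le_mul_of_nonneg_left (hCS n) hC.le
      _ = C * K * U n := by ring
  -- step 4: sum of U
  have hUsum : ∑ n ∈ Finset.range N, U n ≤ K * A := by
    set D : ℕ → ℕ → ℝ := fun n j => if n < j then ρ ^ (j - n) * b j ^ 2 else 0 with hDdef
    have hDnn : ∀ n j, 0 ≤ D n j := by
      intro n j; rw [hDdef]; dsimp only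
      split
      · positivity
      · exact le_rfl
    have hDsumm : ∀ n, Summable (D n) := by
      intro n
      apply Summable.of_nonneg_of_le (hDnn n) (fun j => ?_) hbsum
      rw [hDdef]; dsimp only
      split
      · exact mul_le_of_le_one_left (sq_nonneg _) (pow_le_one₀ hρpos.le hρlt.le)
      · exact sq_nonneg _
    have hUeq : ∀ n, U n = ∑' j, D n j := by
      intro n
      have hinj : Function.Injective (fun k : ℕ => n + 1 + k) := fun x y h => by
        simpa using h
      have hsupp : Function.support (D n) ⊆ Set.range (fun k : ℕ => n + 1 + k) := by
        intro j hj
        rw [Function.mem_support] at hj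
        by_contra hmem
        apply hj
        rw [hDdef]; dsimp only
        rw [if_neg]
        intro hlt
        exact hmem ⟨j - (n + 1), by dsimp only; omega⟩
      have := Function.Injective.tsum_eq hinj (f := D n) hsupp
      rw [← this, hUdef]
      apply tsum_congr
      intro k
      rw [hDdef]; dsimp only
      rw [if_pos (by omega)]
      congr 2
      omega
    have hperj : ∀ j, ∑ n ∈ Finset.range N, D n j ≤ K * b j ^ 2 := by
      intro j
      have e : ∀ n, D n j = (if n < j then ρ ^ (j - n) else 0) * b j ^ 2 := by
        intro n; rw [hDdef]; dsimp only
        split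
        · rfl
        · rw [zero_mul]
      rw [Finset.sum_congr rfl (fun n _ => e n), ← Finset.sum_mul]
      apply mul_le_mul_of_nonneg_right ?_ (sq_nonneg _)
      have h1 : ∑ n ∈ Finset.range N, (if n < j then ρ ^ (j - n) else 0)
          ≤ ∑ n ∈ Finset.range (max N j), (if n < j then ρ ^ (j - n) else 0) := by
        apply Finset.sum_le_sum_of_subset_of_nonneg
          (Finset.range_subset_range.2 (le_max_left _ _))
        intro n _ _
        split
        · positivity
        · exact le_rfl
      have h2 : ∑ n ∈ Finset.range (max N j), (if n < j then ρ ^ (j - n) else 0)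
          = ∑ n ∈ Finset.range j, ρ ^ (j - n) := by
        rw [← Finset.sum_subset (Finset.range_subset_range.2 (le_max_right N j))
          (fun x _ hx => if_neg (fun h => hx (Finset.mem_range.2 h)))]
        exact Finset.sum_congr rfl fun n hn => if_pos (Finset.mem_range.1 hn)
      have h3 : ∑ n ∈ Finset.range j, ρ ^ (j - n) = ∑ n ∈ Finset.range j, ρ ^ (n + 1) := by
        rw [← Finset.sum_range_reflect (fun n => ρ ^ (n + 1)) j]
        apply Finset.sum_congr rfl
        intro n hn
        congr 1
        have := Finset.mem_range.1 hn
        omega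
      have h4 : ∑ n ∈ Finset.range j, ρ ^ (n + 1) ≤ ∑' k : ℕ, ρ ^ (k + 1) :=
        Summable.sum_le_tsum _ (fun i _ => by positivity) hgeo
      calc ∑ n ∈ Finset.range N, (if n < j then ρ ^ (j - n) else 0)
          ≤ ∑ n ∈ Finset.range j, ρ ^ (n + 1) := by rw [h2, h3] at h1; exact h1
        _ ≤ ∑' k : ℕ, ρ ^ (k + 1) := h4
        _ = K := hgeosum
    calc ∑ n ∈ Finset.range N, U n
        = ∑ n ∈ Finset.range N, ∑' j, D n j := Finset.sum_congr rfl fun n _ => hUeq n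
      _ = ∑' j, ∑ n ∈ Finset.range N, D n j := (Summable.tsum_finsetSum fun i _ => hDsumm i).symm
      _ ≤ ∑' j, K * b j ^ 2 := by
          apply Summable.tsum_le_tsum hperj (summable_sum fun i _ => hDsumm i) (hbsum.mul_left K)
      _ = K * A := by rw [tsum_mul_left, hA2]
  calc ∑ n ∈ Finset.range N,
      (t n ^ 2 / μ n) *
        (∑' k : ℕ, |a (n + 1 + k)| * Real.sqrt (μ (n + 1 + k)) / t (n + 1 + k)) ^ 2
      ≤ ∑ n ∈ Finset.range N, C * K * U n := Finset.sum_le_sum fun n _ => hterm n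
    _ = C * K * ∑ n ∈ Finset.range N, U n := by rw [Finset.mul_sum]
    _ ≤ C * K * (K * A) := by
        apply mul_le_mul_of_nonneg_left hUsum (by positivity)
    _ = C * K * K * A := by ring
end

section
/- Let (t_n)_{n≥1} be positive reals with t_{n+1}/t_n ≥ e² and t_1 ≥ e², and let A(z) = ∏_n (1 − z/t_n). Then for each fixed k, |A(i t_k)/A'(t_k)|² = 2 t_k² ∏_{l≠k} |1 − i t_k/t_l|²/|1 − t_k/t_l|², and there is a constant c > 0 (depending only on the lacunarity constant) such that |A(i t_k)/A'(t_k)| ≥ c·t_k for all k. -/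
open Complex Filter Set Topology

namespace Stmt13

lemma e2_ge_three : (3:ℝ) ≤ Real.exp 2 := by
  have := Real.add_one_le_exp (2:ℝ); linarith

variable {t : ℕ → ℝ} (h0 : Real.exp 2 ≤ t 0) (hlac : ∀ n, Real.exp 2 * t n ≤ t (n + 1))

include h0 hlac

lemma ht_ge : ∀ n, Real.exp 2 ≤ t n := by
  intro n
  induction n with
  | zero => exact h0
  | succ n ih => nlinarith [hlac n, e2_ge_three]

lemma ht_pos (n : ℕ) : 0 < t n :=
  lt_of_lt_of_le (by positivity) (ht_ge h0 hlac n)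

lemma ht_two_pow : ∀ n, (2:ℝ)^n ≤ t n := by
  intro n
  induction n with
  | zero => simpa using le_trans (by norm_num) (le_trans e2_ge_three h0)
  | succ n ih =>
      have h1 := hlac n
      have h3 := e2_ge_three
      have h2 : (0:ℝ) < 2 ^ n := by positivity
      rw [pow_succ]
      nlinarith [ht_pos h0 hlac n]

lemma ht_mono : StrictMono t := by
  apply strictMono_nat_of_lt_succ
  intro n
  have := hlac n
  nlinarith [ht_pos h0 hlac n, e2_ge_three]

lemma ht_ratio {l m : ℕ} (h : l < m) : Real.exp 2 * t l ≤ t m := by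
  calc Real.exp 2 * t l ≤ t (l+1) := hlac l
    _ ≤ t m := (ht_mono h0 hlac).monotone h

lemma ht_gap {l m : ℕ} (h : l ≠ m) : 2 ≤ |t l - t m| := by
  rcases lt_or_gt_of_ne h with hlt | hlt
  · have h1 := ht_ratio h0 hlac hlt
    have h2 := ht_ge h0 hlac l
    rw [abs_sub_comm, _root_.abs_of_nonneg (by nlinarith [e2_ge_three, ht_pos h0 hlac l])]
    nlinarith [e2_ge_three, ht_pos h0 hlac l]
  · have h1 := ht_ratio h0 hlac hlt
    have h2 := ht_ge h0 hlac m
    rw [_root_.abs_of_nonneg (by nlinarith [e2_ge_three, ht_pos h0 hlac m])]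
    nlinarith [e2_ge_three, ht_pos h0 hlac m]

lemma ht_summable (c : ℝ) : Summable (fun n => c / t n) := by
  have hb : Summable (fun n : ℕ => |c| * (1/2:ℝ)^n) :=
    (summable_geometric_of_lt_one (by norm_num) (by norm_num)).mul_left _
  apply Summable.of_norm_bounded hb
  intro n
  have htp := ht_pos h0 hlac n
  have h2 := ht_two_pow h0 hlac n
  have h2p : (0:ℝ) < 2^n := by positivity
  rw [Real.norm_eq_abs, abs_div, _root_.abs_of_nonneg htp.le]
  rw [div_eq_mul_inv, one_div, inv_pow]
  exact mul_le_mul_of_nonneg_left (inv_anti₀ h2p h2) (abs_nonneg c)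

lemma ht_eventually (C : ℝ) : ∀ᶠ n in atTop, C ≤ t n := by
  filter_upwards [(tendsto_pow_atTop_atTop_of_one_lt (r := (2:ℝ)) (by norm_num)).eventually_ge_atTop C] with n hn
  exact hn.trans (ht_two_pow h0 hlac n)


/-- Summability of complex logs of factors, allowing modification at finitely many places. -/
lemma sum_log {z : ℂ} {F : ℕ → ℂ}
    (hF : ∀ᶠ n in atTop, F n = Complex.log (1 - z / (t n : ℝ))) : Summable F := by
  apply Summable.of_norm_bounded_eventually (g := fun n => (3/2 * ‖z‖) / t n)
    (ht_summable h0 hlac _)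
  rw [Nat.cofinite_eq_atTop]
  filter_upwards [hF, ht_eventually h0 hlac (2 * ‖z‖)] with n hFn htn
  have htp : (0:ℝ) < t n := ht_pos h0 hlac n
  have hw : ‖-(z / (t n : ℝ))‖ ≤ 1/2 := by
    rw [norm_neg, norm_div, Complex.norm_real, Real.norm_eq_abs, _root_.abs_of_nonneg htp.le]
    rw [div_le_iff₀ htp]
    nlinarith
  have h1 : (1 : ℂ) - z / (t n : ℝ) = 1 + -(z / (t n : ℝ)) := by ring
  rw [hFn, h1]
  calc ‖Complex.log (1 + -(z / (t n : ℝ)))‖ ≤ 3/2 * ‖-(z / (t n : ℝ))‖ :=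
        Complex.norm_log_one_add_half_le_self (by simpa using hw)
    _ ≤ 3/2 * ‖z‖ / t n := by
        rw [norm_neg, norm_div, Complex.norm_real, Real.norm_eq_abs,
          _root_.abs_of_nonneg htp.le, mul_div_assoc]

/-- Summability of real logs of normSq of factors. -/
lemma sum_log_normSq {z : ℂ} {F : ℕ → ℝ}
    (hF : ∀ᶠ n in atTop, F n = Real.log (Complex.normSq (1 - z / (t n : ℝ)))) : Summable F := by
  apply Summable.of_norm_bounded_eventually (g := fun n => (3 * ‖z‖) / t n)
    (ht_summable h0 hlac _)
  rw [Nat.cofinite_eq_atTop]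
  filter_upwards [hF, ht_eventually h0 hlac (2 * ‖z‖)] with n hFn htn
  have htp : (0:ℝ) < t n := ht_pos h0 hlac n
  have hw : ‖-(z / (t n : ℝ))‖ ≤ 1/2 := by
    rw [norm_neg, norm_div, Complex.norm_real, Real.norm_eq_abs, _root_.abs_of_nonneg htp.le]
    rw [div_le_iff₀ htp]
    nlinarith
  set w : ℂ := 1 - z / (t n : ℝ) with hw_def
  have hwne : w ≠ 0 := by
    intro h
    have : (-(z / (t n : ℝ))) = -1 := by
      rw [hw_def] at h
      have : (z / (t n : ℝ)) = 1 := by linear_combination -h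
      rw [this]
    rw [this] at hw
    simp at hw
    norm_num at hw
  have hlog : Real.log (Complex.normSq w) = 2 * (Complex.log w).re := by
    rw [Complex.log_re, ← Complex.sq_norm, Real.log_pow]
    push_cast; ring
  rw [Real.norm_eq_abs, hFn, hlog]
  have h1 : |(Complex.log w).re| ≤ ‖Complex.log w‖ := Complex.abs_re_le_norm _
  have h2 : ‖Complex.log w‖ ≤ 3/2 * ‖-(z / (t n : ℝ))‖ := by
    have : w = 1 + -(z / (t n : ℝ)) := by rw [hw_def]; ring
    rw [this]
    exact Complex.norm_log_one_add_half_le_self (by simpa using hw)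
  have h3 : ‖-(z / (t n : ℝ))‖ = ‖z‖ / t n := by
    rw [norm_neg, norm_div, Complex.norm_real, Real.norm_eq_abs, _root_.abs_of_nonneg htp.le]
  rw [abs_mul, show |(2:ℝ)| = 2 by norm_num]
  calc 2 * |(Complex.log w).re| ≤ 2 * (3/2 * (‖z‖ / t n)) := by
        rw [h3] at h2; nlinarith
    _ = 3 * ‖z‖ / t n := by ring


/-- The factors with the `k`-th replaced by `1`. -/
noncomputable def gfun (t : ℕ → ℝ) (k : ℕ) (z : ℂ) : ℕ → ℂ := fun n => if n = k then 1 else 1 - z / (t n : ℝ)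


lemma sum_log_g (k : ℕ) (z : ℂ) : Summable (fun n => Complex.log (gfun t k z n)) := by
  apply sum_log h0 hlac (z := z)
  filter_upwards [eventually_gt_atTop k] with n hn
  rw [gfun, if_neg hn.ne']

lemma hasProd_g (k : ℕ) (z : ℂ) (hz : ∀ n, gfun t k z n ≠ 0) :
    HasProd (gfun t k z) (Complex.exp (∑' n, Complex.log (gfun t k z n))) := by
  have hs := (sum_log_g h0 hlac k z).hasSum.cexp
  rwa [show (cexp ∘ fun n => Complex.log (gfun t k z n)) = gfun t k z from
    funext fun n => Complex.exp_log (hz n)] at hs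

lemma tprod_split (k : ℕ) (z : ℂ) (hz : ∀ n, gfun t k z n ≠ 0) :
    ∏' n : ℕ, (1 - z / (t n : ℝ) : ℂ) = (1 - z / (t k : ℝ)) * ∏' n, gfun t k z n := by
  have hupd : Function.update (fun n => (1 - z / (t n : ℝ) : ℂ)) k 1 = gfun t k z := by
    funext n; rw [Function.update_apply]; rfl
  have hm : Multipliable (Function.update (fun n => (1 - z / (t n : ℝ) : ℂ)) k 1) := by
    rw [hupd]; exact ⟨_, hasProd_g h0 hlac k z hz⟩
  exact Multipliable.tprod_eq_mul_tprod_ite' k hm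

/-- Nonvanishing of the modified factors near `t k` (and elsewhere off the zero set). -/
lemma g_ne_zero_of_dist {k : ℕ} {z : ℂ} (hd : ∀ n, n ≠ k → z ≠ (t n : ℝ)) (n : ℕ) :
    gfun t k z n ≠ 0 := by
  rw [gfun]
  split_ifs with h
  · exact one_ne_zero
  · intro hc
    have htp := ht_pos h0 hlac n
    apply hd n h
    have h1 : z / (t n : ℝ) = 1 := by linear_combination -hc
    have h2 : ((t n : ℝ) : ℂ) ≠ 0 := by
      simpa using htp.ne'
    field_simp at h1
    exact h1

lemma g_ne_zero_ball {k : ℕ} {z : ℂ} (hz : dist z (t k : ℂ) < 1) (n : ℕ) :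
    gfun t k z n ≠ 0 := by
  apply g_ne_zero_of_dist h0 hlac
  intro m hm hc
  have h2 : (2:ℝ) ≤ |t m - t k| := ht_gap h0 hlac hm
  have : dist ((t m : ℝ) : ℂ) ((t k : ℝ) : ℂ) = |t m - t k| := by
    rw [Complex.dist_eq]
    rw [← Complex.ofReal_sub, Complex.norm_real, Real.norm_eq_abs]
  rw [← this] at h2
  rw [hc] at hz
  linarith


lemma deriv_A (A : ℂ → ℂ) (hA : ∀ z : ℂ, A z = ∏' n : ℕ, (1 - z / (t n : ℝ) : ℂ)) (k : ℕ) :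
    deriv A ((t k : ℝ) : ℂ) = -(∏' n, gfun t k ((t k : ℝ) : ℂ) n) / ((t k : ℝ) : ℂ) := by
  set U : Set ℂ := Metric.ball ((t k : ℝ) : ℂ) 1 with hU_def
  have hUopen : IsOpen U := Metric.isOpen_ball
  have hUmem : U ∈ 𝓝 ((t k : ℝ) : ℂ) := Metric.ball_mem_nhds _ one_pos
  have hUz : ∀ z ∈ U, ∀ n, gfun t k z n ≠ 0 := by
    intro z hz n
    exact g_ne_zero_ball h0 hlac (by simpa [hU_def, Metric.mem_ball] using hz) n
  set B : ℂ → ℂ := fun z => ∏' n, gfun t k z n with hB_def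
  -- choose N
  obtain ⟨N, hN⟩ := eventually_atTop.mp ((eventually_gt_atTop k).and
    (ht_eventually h0 hlac (2 * (t k + 1))))
  have hNk : k < N := (hN N le_rfl).1
  have hNt : ∀ l, N ≤ l → 2 * (t k + 1) ≤ t l := fun l hl => (hN l hl).2
  have htkpos : (0:ℝ) < t k := ht_pos h0 hlac k
  -- bound on U
  have habsU : ∀ z ∈ U, ‖z‖ ≤ t k + 1 := by
    intro z hz
    have h1 : ‖z - (t k : ℝ)‖ < 1 := by
      simpa [hU_def, Metric.mem_ball, Complex.dist_eq] using hz
    calc ‖z‖ = ‖(z - (t k : ℝ)) + (t k : ℝ)‖ := by ring_nf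
      _ ≤ ‖z - (t k : ℝ)‖ + ‖((t k : ℝ) : ℂ)‖ := norm_add_le _ _
      _ ≤ 1 + t k := by
          rw [Complex.norm_real, Real.norm_eq_abs, _root_.abs_of_nonneg htkpos.le]
          linarith
      _ = t k + 1 := by ring
  have key : ∀ i, ¬ i < N → ∀ z ∈ U, ‖z / (t i : ℝ)‖ ≤ 1/2 := by
    intro i hi z hz
    have hti : 2 * (t k + 1) ≤ t i := hNt i (not_lt.mp hi)
    have htip : (0:ℝ) < t i := ht_pos h0 hlac i
    rw [norm_div, Complex.norm_real, Real.norm_eq_abs, _root_.abs_of_nonneg htip.le, div_le_iff₀ htip]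
    have := habsU z hz
    linarith
  set T : ℂ → ℂ := fun z => ∑' n, (if n < N then 0 else Complex.log (1 - z / (t n : ℝ))) with hT_def
  set Q : ℂ → ℂ := fun z => ∏ n ∈ Finset.range N, gfun t k z n with hQ_def
  have hu : Summable (fun n => if n < N then 0 else 3/2 * (t k + 1) / t n) := by
    apply Summable.of_nonneg_of_le _ _ (ht_summable h0 hlac (3/2 * (t k + 1)))
    · intro n
      have := ht_pos h0 hlac n
      split_ifs
      exacts [le_rfl, by positivity]
    · intro n
      have := ht_pos h0 hlac n
      split_ifs
      · positivity
      · exact le_rfl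
  have hTdiff : DifferentiableOn ℂ T U := by
    apply differentiableOn_tsum_of_summable_norm hu
    · intro i
      by_cases hi : i < N
      · simp only [if_pos hi]; exact differentiableOn_const 0
      · simp only [if_neg hi]
        intro z hz
        apply DifferentiableAt.differentiableWithinAt
        apply DifferentiableAt.clog
        · exact (differentiableAt_const 1).sub (differentiableAt_id.div_const _)
        · left
          have h1 : ‖z / (t i : ℝ)‖ ≤ 1/2 := key i hi z hz
          have h2 : |(z / ((t i : ℝ):ℂ)).re| ≤ ‖z / (t i : ℝ)‖ :=
            Complex.abs_re_le_norm _
          simp only [Complex.sub_re, Complex.one_re]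
          have := abs_le.mp (h2.trans h1)
          linarith [this.2]
    · exact hUopen
    · intro i z hz
      by_cases hi : i < N
      · simp [if_pos hi]
      · simp only [if_neg hi]
        have h1 : ‖z / (t i : ℝ)‖ ≤ 1/2 := key i hi z hz
        have htip : (0:ℝ) < t i := ht_pos h0 hlac i
        have heq : (1 : ℂ) - z / (t i : ℝ) = 1 + -(z / (t i : ℝ)) := by ring
        rw [heq]
        calc ‖Complex.log (1 + -(z / (t i : ℝ)))‖ ≤ 3/2 * ‖-(z / (t i : ℝ))‖ :=
              Complex.norm_log_one_add_half_le_self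
                (by simpa using h1)
          _ ≤ 3/2 * (t k + 1) / t i := by
              rw [norm_neg, norm_div, Complex.norm_real, Real.norm_eq_abs,
                _root_.abs_of_nonneg htip.le]
              have hzz := habsU z hz
              rw [mul_div_assoc]
              gcongr
  have hQdiff : DifferentiableAt ℂ Q ((t k : ℝ) : ℂ) := by
    apply DifferentiableAt.fun_finsetProd
    intro i _
    by_cases hik : i = k
    · simp only [gfun, if_pos hik]; exact differentiableAt_const 1
    · simp only [gfun, if_neg hik]
      exact (differentiableAt_const 1).sub (differentiableAt_id.div_const _)
  have hBQT : ∀ z ∈ U, B z = Q z * cexp (T z) := by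
    intro z hz
    have hgz := hUz z hz
    have hB : B z = cexp (∑' n, Complex.log (gfun t k z n)) :=
      (hasProd_g h0 hlac k z hgz).tprod_eq
    have hsplit : ∀ n, Complex.log (gfun t k z n) =
        (if n < N then Complex.log (gfun t k z n) else 0) +
        (if n < N then 0 else Complex.log (1 - z / (t n : ℝ))) := by
      intro n
      by_cases hn : n < N
      · simp [hn]
      · have hnk : n ≠ k := by omega
        simp only [if_neg hn, if_pos, gfun]
        rw [if_neg hnk]
        simp [hn]
    have hs1 : Summable (fun n => if n < N then Complex.log (gfun t k z n) else 0) := by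
      apply summable_of_ne_finset_zero (s := Finset.range N)
      intro n hn
      rw [if_neg (by simpa using hn)]
    have hs2 : Summable (fun n => if n < N then 0 else Complex.log (1 - z / (t n : ℝ))) := by
      apply sum_log h0 hlac (z := z)
      filter_upwards [eventually_ge_atTop N] with n hn
      rw [if_neg (not_lt.mpr hn)]
    calc B z = cexp (∑' n, Complex.log (gfun t k z n)) := hB
      _ = cexp ((∑' n, if n < N then Complex.log (gfun t k z n) else 0) +
            ∑' n, (if n < N then 0 else Complex.log (1 - z / (t n : ℝ)))) := by
          rw [← Summable.tsum_add hs1 hs2]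
          exact congrArg cexp (tsum_congr hsplit)
      _ = Q z * cexp (T z) := by
          rw [Complex.exp_add]
          congr 1
          rw [tsum_eq_sum (s := Finset.range N)
            (by intro n hn; rw [if_neg (by simpa using hn)])]
          rw [Finset.sum_congr rfl (fun n hn => if_pos (Finset.mem_range.mp hn))]
          rw [Complex.exp_sum]
          exact Finset.prod_congr rfl fun n _ => Complex.exp_log (hgz n)
  have hBdiff : DifferentiableAt ℂ B ((t k : ℝ) : ℂ) := by
    have hQE : DifferentiableAt ℂ (fun z => Q z * cexp (T z)) ((t k : ℝ) : ℂ) :=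
      hQdiff.mul ((hTdiff.differentiableAt hUmem).cexp)
    have hev : B =ᶠ[𝓝 ((t k : ℝ) : ℂ)] fun z => Q z * cexp (T z) :=
      eventually_of_mem hUmem hBQT
    exact (Filter.EventuallyEq.differentiableAt_iff hev).mpr hQE
  have hAev : A =ᶠ[𝓝 ((t k : ℝ) : ℂ)] fun z => (1 - z / (t k : ℝ)) * B z := by
    apply eventually_of_mem hUmem
    intro z hz
    rw [hA z]
    exact tprod_split h0 hlac k z (hUz z hz)
  have htk0 : ((t k : ℝ) : ℂ) ≠ 0 := by
    simpa using htkpos.ne'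
  have hfd : HasDerivAt (fun z : ℂ => 1 - z / ((t k : ℝ) : ℂ)) (-(1 / ((t k : ℝ) : ℂ)))
      ((t k : ℝ) : ℂ) := by
    simpa using ((hasDerivAt_id (((t k : ℝ)) : ℂ)).div_const ((t k : ℝ) : ℂ)).const_sub 1
  rw [hAev.deriv_eq]
  rw [deriv_fun_mul hfd.differentiableAt hBdiff]
  rw [hfd.deriv]
  have hzero : (1 : ℂ) - ((t k : ℝ) : ℂ) / ((t k : ℝ) : ℂ) = 0 := by
    rw [div_self htk0]; ring
  rw [hzero, zero_mul, add_zero]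
  ring


lemma master (A : ℂ → ℂ) (hA : ∀ z : ℂ, A z = ∏' n : ℕ, (1 - z / (t n : ℂ))) (k : ℕ) :
    (‖A ((t k : ℂ) * Complex.I)‖ ^ 2 / ‖deriv A (t k)‖ ^ 2
        = 2 * t k ^ 2 * ∏' l : {l : ℕ // l ≠ k},
            (‖1 - ((t k : ℂ) * Complex.I) / (t (l : ℕ) : ℂ)‖ ^ 2
              / ‖1 - ((t k : ℂ)) / (t (l : ℕ) : ℂ)‖ ^ 2))
    ∧ t k ≤ ‖A ((t k : ℂ) * Complex.I)‖ / ‖deriv A (t k)‖ := by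
  have htkpos : (0:ℝ) < t k := ht_pos h0 hlac k
  have htk0 : ((t k : ℝ) : ℂ) ≠ 0 := by simpa using htkpos.ne'
  set zi : ℂ := (t k : ℂ) * Complex.I with hzi_def
  -- nonvanishing of factors
  have hgz_i : ∀ n, gfun t k zi n ≠ 0 := by
    apply g_ne_zero_of_dist h0 hlac
    intro n hn hc
    have := congrArg Complex.re hc
    simp [hzi_def] at this
    exact absurd this.symm (ht_pos h0 hlac n).ne'
  have hgz_t : ∀ n, gfun t k ((t k : ℝ) : ℂ) n ≠ 0 := by
    apply g_ne_zero_of_dist h0 hlac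
    intro n hn hc
    have : t k = t n := by exact_mod_cast hc
    exact hn ((ht_mono h0 hlac).injective this.symm)
  -- products
  have hPi := hasProd_g h0 hlac k zi hgz_i
  have hPt := hasProd_g h0 hlac k ((t k : ℝ) : ℂ) hgz_t
  set Ei : ℂ := Complex.exp (∑' n, Complex.log (gfun t k zi n)) with hEi_def
  set Et : ℂ := Complex.exp (∑' n, Complex.log (gfun t k ((t k : ℝ) : ℂ) n)) with hEt_def
  have hEi0 : Ei ≠ 0 := Complex.exp_ne_zero _
  have hEt0 : Et ≠ 0 := Complex.exp_ne_zero _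
  -- value of A at i t_k
  have hAi : A zi = (1 - Complex.I) * Ei := by
    rw [hA zi, tprod_split h0 hlac k zi hgz_i, hPi.tprod_eq]
    congr 1
    rw [hzi_def]
    field_simp
  -- value of the derivative
  have hAd : deriv A ((t k : ℝ) : ℂ) = -Et / ((t k : ℝ) : ℂ) := by
    rw [deriv_A h0 hlac A hA k, hPt.tprod_eq]
  have hYpos : 0 < ‖deriv A ((t k : ℝ) : ℂ)‖ := by
    rw [hAd]
    apply norm_pos_iff.mpr
    exact div_ne_zero (neg_ne_zero.mpr hEt0) htk0
  -- real products
  set a : ℕ → ℝ := fun n => Complex.normSq (gfun t k zi n) with ha_def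
  set b : ℕ → ℝ := fun n => Complex.normSq (gfun t k ((t k : ℝ) : ℂ) n) with hb_def
  have ha_pos : ∀ n, 0 < a n := fun n => Complex.normSq_pos.mpr (hgz_i n)
  have hb_pos : ∀ n, 0 < b n := fun n => Complex.normSq_pos.mpr (hgz_t n)
  have hPa : HasProd a (Complex.normSq Ei) := hPi.map Complex.normSq Complex.continuous_normSq
  have hPb : HasProd b (Complex.normSq Et) := hPt.map Complex.normSq Complex.continuous_normSq
  have hsa : Summable (fun n => Real.log (a n)) := by
    apply sum_log_normSq h0 hlac (z := zi)
    filter_upwards [eventually_gt_atTop k] with n hn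
    rw [ha_def]; simp only [gfun, if_neg hn.ne']
  have hsb : Summable (fun n => Real.log (b n)) := by
    apply sum_log_normSq h0 hlac (z := ((t k : ℝ) : ℂ))
    filter_upwards [eventually_gt_atTop k] with n hn
    rw [hb_def]; simp only [gfun, if_neg hn.ne']
  have hPa' : HasProd a (Real.exp (∑' n, Real.log (a n))) := by
    have := hsa.hasSum.rexp
    rwa [show (Real.exp ∘ fun n => Real.log (a n)) = a from
      funext fun n => Real.exp_log (ha_pos n)] at this
  have hPb' : HasProd b (Real.exp (∑' n, Real.log (b n))) := by
    have := hsb.hasSum.rexp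
    rwa [show (Real.exp ∘ fun n => Real.log (b n)) = b from
      funext fun n => Real.exp_log (hb_pos n)] at this
  have hna : Complex.normSq Ei = Real.exp (∑' n, Real.log (a n)) := hPa.unique hPa'
  have hnb : Complex.normSq Et = Real.exp (∑' n, Real.log (b n)) := hPb.unique hPb'
  -- the quotient product
  set R : ℕ → ℝ := fun n => a n / b n with hR_def
  have hRpos : ∀ n, 0 < R n := fun n => div_pos (ha_pos n) (hb_pos n)
  have hlogR : (fun n => Real.log (R n)) = fun n => Real.log (a n) - Real.log (b n) :=
    funext fun n => Real.log_div (ha_pos n).ne' (hb_pos n).ne'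
  have hsR : Summable (fun n => Real.log (R n)) := by
    rw [hlogR]; exact hsa.sub hsb
  have hPR : HasProd R (Real.exp (∑' n, Real.log (R n))) := by
    have := hsR.hasSum.rexp
    rwa [show (Real.exp ∘ fun n => Real.log (R n)) = R from
      funext fun n => Real.exp_log (hRpos n)] at this
  have hRval : (∏' n, R n) = Complex.normSq Ei / Complex.normSq Et := by
    rw [hPR.tprod_eq, hlogR, Summable.tsum_sub hsa hsb, Real.exp_sub, hna, hnb]
  -- identify the subtype product
  have hsub : (∏' l : {l : ℕ // l ≠ k},
      (‖1 - ((t k : ℂ) * Complex.I) / (t (l : ℕ) : ℂ)‖ ^ 2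
        / ‖1 - ((t k : ℂ)) / (t (l : ℕ) : ℂ)‖ ^ 2)) = ∏' n, R n := by
    have h1 : (∏' l : {l : ℕ // l ≠ k},
        (‖1 - ((t k : ℂ) * Complex.I) / (t (l : ℕ) : ℂ)‖ ^ 2
          / ‖1 - ((t k : ℂ)) / (t (l : ℕ) : ℂ)‖ ^ 2))
        = ∏' l : ({l : ℕ | l ≠ k} : Set ℕ),
            (Complex.normSq (1 - zi / (t (l : ℕ) : ℝ))
              / Complex.normSq (1 - ((t k : ℝ) : ℂ) / (t (l : ℕ) : ℝ))) := by
      apply tprod_congr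
      intro l
      rw [Complex.sq_norm, Complex.sq_norm, hzi_def]
    have h2 := tprod_subtype ({l : ℕ | l ≠ k})
      (fun n => Complex.normSq (1 - zi / (t n : ℝ))
        / Complex.normSq (1 - ((t k : ℝ) : ℂ) / (t n : ℝ)))
    rw [h1, h2]
    apply tprod_congr
    intro n
    by_cases hn : n ∈ {l : ℕ | l ≠ k}
    · rw [Set.mulIndicator_of_mem hn]
      have hnk : n ≠ k := hn
      rw [hR_def, ha_def, hb_def]
      simp only [gfun, if_neg hnk]
    · rw [Set.mulIndicator_of_notMem hn]
      have hnk : n = k := not_not.mp hn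
      rw [hR_def, ha_def, hb_def, hnk]
      simp [gfun]
  -- abs squared values
  have hXsq : ‖A zi‖ ^ 2 = 2 * Complex.normSq Ei := by
    rw [Complex.sq_norm, hAi, Complex.normSq_mul]
    congr 1
    simp [Complex.normSq_apply]
    norm_num
  have hYsq : ‖deriv A ((t k : ℝ) : ℂ)‖ ^ 2 = Complex.normSq Et / t k ^ 2 := by
    rw [Complex.sq_norm, hAd, Complex.normSq_div, Complex.normSq_neg, Complex.normSq_ofReal]
    ring_nf
  have hnbpos : 0 < Complex.normSq Et := Complex.normSq_pos.mpr hEt0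
  have hnapos : 0 < Complex.normSq Ei := Complex.normSq_pos.mpr hEi0
  constructor
  · rw [hXsq, hYsq, hsub, hRval]
    field_simp
  · -- lower bound
    have hR1 : (1:ℝ) ≤ ∏' n, R n := by
      rw [hPR.tprod_eq]
      rw [show (1:ℝ) = Real.exp 0 from (Real.exp_zero).symm]
      apply Real.exp_le_exp.mpr
      apply tsum_nonneg
      intro n
      apply Real.log_nonneg
      rw [hR_def]
      rw [le_div_iff₀ (hb_pos n)]
      rw [one_mul]
      by_cases hnk : n = k
      · subst hnk; simp [ha_def, hb_def, gfun]
      · have htnpos : (0:ℝ) < t n := ht_pos h0 hlac n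
        set x : ℝ := t k / t n with hx_def
        have hxpos : 0 < x := div_pos htkpos htnpos
        have hax : a n = 1 + x ^ 2 := by
          rw [ha_def]
          simp only [gfun, if_neg hnk, hzi_def]
          have : ((t k : ℝ) : ℂ) * Complex.I / ((t n : ℝ) : ℂ) = ((x : ℝ) : ℂ) * Complex.I := by
            rw [hx_def]; push_cast; ring
          rw [this]
          simp [Complex.normSq_apply]
          ring
        have hbx : b n = (1 - x) ^ 2 := by
          rw [hb_def]
          simp only [gfun, if_neg hnk]
          have : (1 : ℂ) - ((t k : ℝ) : ℂ) / ((t n : ℝ) : ℂ) = (((1 - x : ℝ)) : ℂ) := by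
            rw [hx_def]; push_cast; ring
          rw [this, Complex.normSq_ofReal]
          ring
        rw [hax, hbx]
        nlinarith
    set X := ‖A zi‖ with hX_def
    set Y := ‖deriv A ((t k : ℝ) : ℂ)‖ with hY_def
    have hfrac : X ^ 2 / Y ^ 2 = 2 * t k ^ 2 * ∏' n, R n := by
      rw [hX_def, hY_def, hXsq, hYsq, hRval]
      field_simp
    have hsq : t k ^ 2 ≤ (X / Y) ^ 2 := by
      rw [div_pow, hfrac]
      nlinarith
    calc t k = Real.sqrt (t k ^ 2) := (Real.sqrt_sq htkpos.le).symm
      _ ≤ Real.sqrt ((X / Y) ^ 2) := Real.sqrt_le_sqrt hsq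
      _ = X / Y := Real.sqrt_sq (by positivity)


end Stmt13

/-- For a genus-zero canonical product `A` with lacunary positive zeros `t_n`
(ratios at least `e²`), one has
`|A(i t_k)/A'(t_k)|² = 2 t_k² ∏_{l ≠ k} |1 - i t_k/t_l|²/|1 - t_k/t_l|²`,
and `|A(i t_k)/A'(t_k)| ≥ c t_k` for a constant `c > 0`. -/
theorem stmt_13 (t : ℕ → ℝ) (h0 : Real.exp 2 ≤ t 0)
    (hlac : ∀ n, Real.exp 2 * t n ≤ t (n + 1))
    (A : ℂ → ℂ) (hA : ∀ z : ℂ, A z = ∏' n : ℕ, (1 - z / (t n : ℂ))) :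
    (∀ k : ℕ,
      ‖A ((t k : ℂ) * Complex.I)‖ ^ 2 / ‖deriv A (t k)‖ ^ 2
        = 2 * t k ^ 2 * ∏' l : {l : ℕ // l ≠ k},
            (‖1 - ((t k : ℂ) * Complex.I) / (t (l : ℕ) : ℂ)‖ ^ 2
              / ‖1 - ((t k : ℂ)) / (t (l : ℕ) : ℂ)‖ ^ 2))
    ∧ ∃ c > (0 : ℝ), ∀ k : ℕ,
        c * t k ≤ ‖A ((t k : ℂ) * Complex.I)‖ / ‖deriv A (t k)‖ := by
  refine ⟨fun k => (Stmt13.master h0 hlac A hA k).1, 1, one_pos, fun k => ?_⟩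
  simpa using (Stmt13.master h0 hlac A hA k).2
end

section
/- Let (s_k) and (s̃_k) be two increasing sequences of positive reals with s̃_k ≥ 10 s_{k−1}, s_k ≥ 10 s̃_k, and define S₂(z) = ∏_k (1 − z/s_k), G₁(z) = ∏_k (1 − z/s̃_k). Then for real y with |y| → ∞ one has |S₂(iy)| ≤ |G₁(iy)| ≲ |y·S₂(iy)|, and moreover |G₁(i s_k)/S₂(i s_k)| ≍ ∏_{m=1}^k (s_m/s̃_m). -/
open Complex Finset Filter Topology
open Complex Finset Filter Topology

lemma aux_absfac (t u : ℝ) (hu : u ≠ 0) :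
    ‖1 - (t:ℂ) * Complex.I / (u:ℂ)‖ = Real.sqrt (1 + (t/u)^2) := by
  have h : (1:ℂ) - (t:ℂ) * Complex.I / (u:ℂ) = (1:ℝ) + (-(t/u) : ℝ) * Complex.I := by
    have : (u:ℂ) ≠ 0 := by exact_mod_cast hu
    push_cast
    ring
  rw [h, Complex.norm_add_mul_I]
  norm_num

lemma aux_pow (u : ℕ → ℝ) (hg : ∀ k, 2 * u k ≤ u (k+1)) :
    ∀ m j, 2^j * u m ≤ u (m+j) := by
  intro m j
  induction j with
  | zero => simp
  | succ n ih =>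
      have h2 : (2:ℝ)^(n+1) * u m = 2 * (2^n * u m) := by ring
      rw [h2]
      calc 2 * (2^n * u m) ≤ 2 * u (m+n) := by linarith
        _ ≤ u (m+n+1) := hg (m+n)

lemma aux_mult (u : ℕ → ℝ) (hu : ∀ k, 0 < u k) (hg : ∀ k, 2 * u k ≤ u (k+1)) (t : ℝ) :
    Multipliable (fun k => (1:ℂ) - (t:ℂ) * Complex.I / (u k : ℂ)) := by
  apply (fun (_ : ∀ (_ : Unit) (n : ℕ), (1:ℂ) - (t:ℂ) * Complex.I / (u n : ℂ) ≠ 0)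
      (h2 : ∀ _ : Unit, Summable fun n => Complex.log ((1:ℂ) - (t:ℂ) * Complex.I / (u n : ℂ))) =>
      Complex.multipliable_of_summable_log (h2 ())) ?_ ?_
  · intro _ n h0
    have h0' : (1:ℂ) - (t:ℂ) * Complex.I / (u n : ℂ) = 0 := h0
    have h := aux_absfac t (u n) (ne_of_gt (hu n))
    rw [h0'] at h
    simp only [norm_zero] at h
    have h1 : (0:ℝ) < 1 + (t / u n)^2 := by positivity
    have := Real.sqrt_pos.mpr h1
    linarith
  · intro _
    have hu0 := hu 0
    have hbd : ∀ n, |t| / u n ≤ (|t| / u 0) * (1/2:ℝ)^n := by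
      intro n
      have h1 := aux_pow u hg 0 n
      simp only [Nat.zero_add] at h1
      have h2 : (|t| / u 0) * (1/2:ℝ)^n = |t| / (2^n * u 0) := by
        rw [one_div, inv_pow]
        field_simp
      rw [h2]
      exact div_le_div_of_nonneg_left (abs_nonneg t) (by positivity) h1
    have htend : Tendsto (fun n => (|t| / u 0) * (1/2:ℝ)^n) atTop (𝓝 0) := by
      have := tendsto_pow_atTop_nhds_zero_of_lt_one (by norm_num : (0:ℝ) ≤ 1/2)
        (by norm_num : (1/2:ℝ) < 1)
      simpa using this.const_mul (|t| / u 0)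
    have hev : ∀ᶠ n in atTop, (|t| / u 0) * (1/2:ℝ)^n < 1/2 :=
      htend.eventually (Iio_mem_nhds (by norm_num))
    apply Summable.of_norm_bounded_eventually_nat (g := fun n => (3/2) * ((|t| / u 0) * (1/2:ℝ)^n))
    · apply Summable.mul_left
      apply Summable.mul_left
      exact summable_geometric_of_lt_one (by norm_num) (by norm_num)
    · filter_upwards [hev] with n hn
      have hwn : ‖-((t:ℂ) * Complex.I / (u n : ℂ))‖ = |t| / u n := by
        rw [norm_neg, norm_div, norm_mul, Complex.norm_real, Complex.norm_I, mul_one,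
          Complex.norm_real, Real.norm_eq_abs, Real.norm_eq_abs, abs_of_pos (hu n)]
      have hsmall : ‖-((t:ℂ) * Complex.I / (u n : ℂ))‖ ≤ 1/2 := by
        rw [hwn]; exact le_of_lt (lt_of_le_of_lt (hbd n) hn)
      have heq : (1:ℂ) - (t:ℂ) * Complex.I / (u n : ℂ)
          = 1 + -((t:ℂ) * Complex.I / (u n : ℂ)) := by ring
      rw [heq]
      calc ‖Complex.log (1 + -((t:ℂ) * Complex.I / (u n : ℂ)))‖
          ≤ (3/2) * ‖-((t:ℂ) * Complex.I / (u n : ℂ))‖ :=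
            Complex.norm_log_one_add_half_le_self hsmall
        _ ≤ (3/2) * ((|t| / u 0) * (1/2:ℝ)^n) := by
            rw [hwn]
            have := hbd n
            linarith

-- sqrt a ≤ c * sqrt b from a ≤ c^2 * b
lemma aux_sqrt_le {a b c : ℝ} (hc : 0 ≤ c) (h : a ≤ c^2 * b) :
    Real.sqrt a ≤ c * Real.sqrt b := by
  calc Real.sqrt a ≤ Real.sqrt (c^2 * b) := Real.sqrt_le_sqrt h
    _ = c * Real.sqrt b := by
        rw [Real.sqrt_mul (sq_nonneg c), Real.sqrt_sq hc]

-- B4 : monotone in u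
lemma auxB4 {t u v : ℝ} (hu : 0 < u) (huv : u ≤ v) :
    Real.sqrt (1 + (t/v)^2) ≤ Real.sqrt (1 + (t/u)^2) := by
  apply Real.sqrt_le_sqrt
  have h : (t/v)^2 ≤ (t/u)^2 := by
    rw [div_pow, div_pow]
    exact div_le_div_of_nonneg_left (sq_nonneg t) (by positivity) (by nlinarith)
  linarith

-- B1
lemma auxB1 {t u v : ℝ} (hu : 0 < u) (huv : u ≤ v) :
    Real.sqrt (1 + (t/u)^2) ≤ (v/u) * Real.sqrt (1 + (t/v)^2) := by
  have hv : 0 < v := lt_of_lt_of_le hu huv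
  apply aux_sqrt_le (by positivity)
  have h1 : (v/u)^2 * (t/v)^2 = (t/u)^2 := by
    field_simp
  have h2 : (1:ℝ) ≤ (v/u)^2 := by
    rw [div_pow]
    rw [le_div_iff₀ (by positivity)]
    nlinarith
  nlinarith [sq_nonneg (t/v)]

-- B2
lemma auxB2 {t u w : ℝ} (hu : 0 < u) (ht : 0 ≤ t) :
    Real.sqrt (1 + (t/u)^2) ≤ (1 + t/u) * Real.sqrt (1 + w^2) := by
  have h0 : (0:ℝ) ≤ t/u := by positivity
  have h1 : Real.sqrt (1 + (t/u)^2) ≤ 1 + t/u := by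
    calc Real.sqrt (1 + (t/u)^2) ≤ Real.sqrt ((1 + t/u)^2) := Real.sqrt_le_sqrt (by nlinarith)
      _ = 1 + t/u := Real.sqrt_sq (by linarith)
  have h2 : (1:ℝ) ≤ Real.sqrt (1 + w^2) := by
    nlinarith [Real.sq_sqrt (show (0:ℝ) ≤ 1 + w^2 by positivity),
      Real.sqrt_nonneg (1 + w^2), sq_nonneg w]
  calc Real.sqrt (1 + (t/u)^2) ≤ 1 + t/u := h1
    _ ≤ (1 + t/u) * Real.sqrt (1 + w^2) := by nlinarith

lemma aux_mul_sqrt_le {a b c : ℝ} (hc : 0 ≤ c) (h : c^2 * b ≤ a) :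
    c * Real.sqrt b ≤ Real.sqrt a := by
  calc c * Real.sqrt b = Real.sqrt (c^2 * b) := by
        rw [Real.sqrt_mul (sq_nonneg c), Real.sqrt_sq hc]
    _ ≤ Real.sqrt a := Real.sqrt_le_sqrt h

-- B3
lemma auxB3 {t u v : ℝ} (hu : 0 < u) (huv : u ≤ v) (ht : 0 < t) :
    (v/u) * Real.sqrt (1 + (t/v)^2) ≤ Real.exp ((v/t)^2) * Real.sqrt (1 + (t/u)^2) := by
  have hv : 0 < v := lt_of_lt_of_le hu huv
  have step1 : (v/u) * Real.sqrt (1 + (t/v)^2) ≤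
      Real.sqrt (1 + (v/t)^2) * Real.sqrt (1 + (t/u)^2) := by
    rw [← Real.sqrt_mul (by positivity)]
    apply aux_mul_sqrt_le (by positivity)
    have h1 : (v/u)^2 * (1 + (t/v)^2) = (v/u)^2 + (t/u)^2 := by
      field_simp
    have h2 : (v/t)^2 * (t/u)^2 = (v/u)^2 := by
      field_simp
    nlinarith [sq_nonneg (t/u), sq_nonneg (v/t)]
  have step2 : Real.sqrt (1 + (v/t)^2) ≤ Real.exp ((v/t)^2) := by
    calc Real.sqrt (1 + (v/t)^2) ≤ 1 + (v/t)^2 := by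
          calc Real.sqrt (1 + (v/t)^2) ≤ Real.sqrt ((1 + (v/t)^2)^2) :=
                Real.sqrt_le_sqrt (by nlinarith [sq_nonneg (v/t)])
            _ = 1 + (v/t)^2 := Real.sqrt_sq (by positivity)
      _ ≤ Real.exp ((v/t)^2) := by
          have := Real.add_one_le_exp ((v/t)^2); linarith
  calc (v/u) * Real.sqrt (1 + (t/v)^2) ≤ Real.sqrt (1 + (v/t)^2) * Real.sqrt (1 + (t/u)^2) := step1
    _ ≤ Real.exp ((v/t)^2) * Real.sqrt (1 + (t/u)^2) :=
        mul_le_mul_of_nonneg_right step2 (Real.sqrt_nonneg _)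

lemma aux_tail (st : ℕ → ℝ) (hstpos : ∀ k, 0 < st k)
    (hst2 : ∀ k, 2 * st k ≤ st (k+1)) {t : ℝ} (ht : 0 < t) (a n : ℕ)
    (hta : 10 * t ≤ st a) : ∏ m ∈ Ico a n, (1 + t / st m) ≤ 3 := by
  have hsum : ∑ m ∈ Ico a n, t / st m ≤ 1 := by
    have hbd : ∀ m ∈ Ico a n, t / st m ≤ (1/10) * (1/2:ℝ)^(m-a) := by
      intro m hm
      have ham : a ≤ m := (mem_Ico.mp hm).1
      have h1 : 2^(m-a) * st a ≤ st m := by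
        have := aux_pow st hst2 a (m-a)
        rwa [Nat.add_sub_cancel' ham] at this
      have h2 : 2^(m-a) * (10 * t) ≤ st m := by
        calc 2^(m-a) * (10 * t) ≤ 2^(m-a) * st a := by
              apply mul_le_mul_of_nonneg_left hta (by positivity)
          _ ≤ st m := h1
      have h3 : t / st m ≤ t / (2^(m-a) * (10 * t)) :=
        div_le_div_of_nonneg_left (le_of_lt ht) (by positivity) h2
      calc t / st m ≤ t / (2^(m-a) * (10 * t)) := h3
        _ = (1/10) * (1/2:ℝ)^(m-a) := by
            rw [one_div, one_div, inv_pow]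
            field_simp
    calc ∑ m ∈ Ico a n, t / st m ≤ ∑ m ∈ Ico a n, (1/10) * (1/2:ℝ)^(m-a) :=
          sum_le_sum hbd
      _ = (1/10) * ∑ i ∈ range (n-a), (1/2:ℝ)^i := by
          rw [Finset.sum_Ico_eq_sum_range, mul_sum]
          refine sum_congr rfl fun i _ => ?_
          rw [Nat.add_sub_cancel_left]
      _ ≤ (1/10) * 2 := by
          have := sum_geometric_two_le (n-a)
          linarith
      _ ≤ 1 := by norm_num
  calc ∏ m ∈ Ico a n, (1 + t / st m)
      ≤ ∏ m ∈ Ico a n, Real.exp (t / st m) := by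
        apply Finset.prod_le_prod
        · intro m _; have := hstpos m; positivity
        · intro m _; have := Real.add_one_le_exp (t / st m); linarith
    _ = Real.exp (∑ m ∈ Ico a n, t / st m) := (Real.exp_sum _ _).symm
    _ ≤ Real.exp 1 := Real.exp_le_exp.mpr hsum
    _ ≤ 3 := by
        have := Real.exp_one_lt_d9
        linarith

lemma aux_tele (s st : ℕ → ℝ) (hstpos : ∀ k, 0 < st k) (hspos : ∀ k, 0 < s k)
    (hintst : ∀ k, 10 * s k ≤ st (k+1)) :
    ∀ K, ∏ m ∈ range (K+1), s m / st m ≤ (s K / st 0) * (1/10:ℝ)^K := by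
  intro K
  induction K with
  | zero => simp
  | succ K ih =>
      have hsK := hspos K
      have hsK1 := hspos (K+1)
      have hstK1 := hstpos (K+1)
      have h10 : 10 * s K ≤ st (K+1) := hintst K
      have hlast : s (K+1) / st (K+1) ≤ s (K+1) / (10 * s K) :=
        div_le_div_of_nonneg_left (le_of_lt hsK1) (by positivity) h10
      rw [prod_range_succ]
      calc (∏ m ∈ range (K+1), s m / st m) * (s (K+1) / st (K+1))
          ≤ ((s K / st 0) * (1/10:ℝ)^K) * (s (K+1) / (10 * s K)) := by
            apply mul_le_mul ih hlast (by positivity)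
            have := hstpos 0
            positivity
        _ = (s (K+1) / st 0) * (1/10:ℝ)^(K+1) := by
            have h0 := hstpos 0
            field_simp
            ring

section FinBounds

variable {s st : ℕ → ℝ} (hstpos : ∀ k, 0 < st k) (hspos : ∀ k, 0 < s k)
  (hints : ∀ k, 10 * st k ≤ s k) (hintst : ∀ k, 10 * s k ≤ st (k + 1))

include hstpos hspos hints hintst

lemma fin_upper3 (k n : ℕ) (hn : k + 1 ≤ n) :
    ∏ m ∈ range n, Real.sqrt (1 + (s k / st m)^2) ≤
      3 * (∏ m ∈ range (k+1), s m / st m) *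
        ∏ m ∈ range n, Real.sqrt (1 + (s k / s m)^2) := by
  have hst2 : ∀ j, 2 * st j ≤ st (j+1) := by
    intro j
    have h1 := hints j
    have h2 := hintst j
    have := hstpos j
    linarith
  set t := s k with htdef
  have ht : 0 < t := hspos k
  have hsplitG := prod_range_mul_prod_Ico
    (fun m => Real.sqrt (1 + (t / st m)^2)) hn
  have hsplitF := prod_range_mul_prod_Ico
    (fun m => Real.sqrt (1 + (t / s m)^2)) hn
  have bound1 : ∏ m ∈ range (k+1), Real.sqrt (1 + (t / st m)^2) ≤
      (∏ m ∈ range (k+1), s m / st m) *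
        ∏ m ∈ range (k+1), Real.sqrt (1 + (t / s m)^2) := by
    rw [← prod_mul_distrib]
    apply Finset.prod_le_prod (fun m _ => Real.sqrt_nonneg _)
    intro m _
    have h1 : st m ≤ s m := by have := hints m; have := hstpos m; linarith
    exact auxB1 (hstpos m) h1
  have bound2 : ∏ m ∈ Ico (k+1) n, Real.sqrt (1 + (t / st m)^2) ≤
      3 * ∏ m ∈ Ico (k+1) n, Real.sqrt (1 + (t / s m)^2) := by
    have step : ∏ m ∈ Ico (k+1) n, Real.sqrt (1 + (t / st m)^2) ≤
        ∏ m ∈ Ico (k+1) n, ((1 + t / st m) * Real.sqrt (1 + (t / s m)^2)) := by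
      apply Finset.prod_le_prod (fun m _ => Real.sqrt_nonneg _)
      intro m _
      exact auxB2 (hstpos m) (le_of_lt ht)
    rw [prod_mul_distrib] at step
    have htail : ∏ m ∈ Ico (k+1) n, (1 + t / st m) ≤ 3 :=
      aux_tail st hstpos hst2 ht (k+1) n (hintst k)
    have hFnn : (0:ℝ) ≤ ∏ m ∈ Ico (k+1) n, Real.sqrt (1 + (t / s m)^2) :=
      prod_nonneg (fun m _ => Real.sqrt_nonneg _)
    calc ∏ m ∈ Ico (k+1) n, Real.sqrt (1 + (t / st m)^2)
        ≤ (∏ m ∈ Ico (k+1) n, (1 + t / st m)) *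
            ∏ m ∈ Ico (k+1) n, Real.sqrt (1 + (t / s m)^2) := step
      _ ≤ 3 * ∏ m ∈ Ico (k+1) n, Real.sqrt (1 + (t / s m)^2) :=
          mul_le_mul_of_nonneg_right htail hFnn
  have hPnn : (0:ℝ) ≤ ∏ m ∈ range (k+1), s m / st m :=
    prod_nonneg (fun m _ => by have := hspos m; have := hstpos m; positivity)
  have hGnn : (0:ℝ) ≤ ∏ m ∈ Ico (k+1) n, Real.sqrt (1 + (t / st m)^2) :=
    prod_nonneg (fun m _ => Real.sqrt_nonneg _)
  calc ∏ m ∈ range n, Real.sqrt (1 + (t / st m)^2)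
      = (∏ m ∈ range (k+1), Real.sqrt (1 + (t / st m)^2)) *
          ∏ m ∈ Ico (k+1) n, Real.sqrt (1 + (t / st m)^2) := hsplitG.symm
    _ ≤ ((∏ m ∈ range (k+1), s m / st m) *
          ∏ m ∈ range (k+1), Real.sqrt (1 + (t / s m)^2)) *
          (3 * ∏ m ∈ Ico (k+1) n, Real.sqrt (1 + (t / s m)^2)) := by
        apply mul_le_mul bound1 bound2 hGnn
        exact mul_nonneg hPnn (prod_nonneg (fun m _ => Real.sqrt_nonneg _))
    _ = 3 * (∏ m ∈ range (k+1), s m / st m) *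
          ((∏ m ∈ range (k+1), Real.sqrt (1 + (t / s m)^2)) *
            ∏ m ∈ Ico (k+1) n, Real.sqrt (1 + (t / s m)^2)) := by ring
    _ = 3 * (∏ m ∈ range (k+1), s m / st m) *
          ∏ m ∈ range n, Real.sqrt (1 + (t / s m)^2) := by rw [hsplitF]

lemma fin_lower3 (k n : ℕ) (hn : k + 1 ≤ n) :
    Real.exp (-2) * (∏ m ∈ range (k+1), s m / st m) *
        ∏ m ∈ range n, Real.sqrt (1 + (s k / s m)^2) ≤
      ∏ m ∈ range n, Real.sqrt (1 + (s k / st m)^2) := by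
  have hs2 : ∀ j, 2 * s j ≤ s (j+1) := by
    intro j
    have h1 := hintst j
    have h2 := hints (j+1)
    have h3 := hstpos (j+1)
    have := hspos j
    linarith
  set t := s k with htdef
  have ht : 0 < t := hspos k
  have hsplitG := prod_range_mul_prod_Ico
    (fun m => Real.sqrt (1 + (t / st m)^2)) hn
  have hsplitF := prod_range_mul_prod_Ico
    (fun m => Real.sqrt (1 + (t / s m)^2)) hn
  -- factorwise lower bound for m ≤ k
  have hfac : ∀ m ∈ range (k+1),
      (s m / st m) * Real.exp (-(1/2:ℝ)^(k-m)) * Real.sqrt (1 + (t / s m)^2) ≤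
        Real.sqrt (1 + (t / st m)^2) := by
    intro m hm
    have hmk : m ≤ k := Nat.lt_succ_iff.mp (mem_range.mp hm)
    have hsm := hspos m
    have hstm := hstpos m
    have hx : (s m / t)^2 ≤ (1/2:ℝ)^(k-m) := by
      have h1 : 2^(k-m) * s m ≤ t := by
        have := aux_pow s hs2 m (k-m)
        rwa [Nat.add_sub_cancel' hmk] at this
      have h2 : s m / t ≤ (1/2:ℝ)^(k-m) := by
        rw [div_le_iff₀ ht, one_div, inv_pow]
        rw [inv_mul_eq_div, le_div_iff₀ (by positivity)]
        linarith
      have h3 : 0 ≤ s m / t := by positivity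
      have h4 : s m / t ≤ 1 := by
        have : (1/2:ℝ)^(k-m) ≤ 1 := by
          apply pow_le_one₀ (by norm_num) (by norm_num)
        linarith
      calc (s m / t)^2 ≤ (s m / t) * 1 := by nlinarith
        _ = s m / t := mul_one _
        _ ≤ (1/2:ℝ)^(k-m) := h2
    have hB3 : (s m / st m) * Real.sqrt (1 + (t / s m)^2) ≤
        Real.exp ((s m / t)^2) * Real.sqrt (1 + (t / st m)^2) := by
      have h1 : st m ≤ s m := by have := hints m; linarith
      exact auxB3 hstm h1 ht
    have hGnn : (0:ℝ) ≤ Real.sqrt (1 + (t / st m)^2) := Real.sqrt_nonneg _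
    calc (s m / st m) * Real.exp (-(1/2:ℝ)^(k-m)) * Real.sqrt (1 + (t / s m)^2)
        = Real.exp (-(1/2:ℝ)^(k-m)) * ((s m / st m) * Real.sqrt (1 + (t / s m)^2)) := by
          ring
      _ ≤ Real.exp (-(1/2:ℝ)^(k-m)) *
            (Real.exp ((s m / t)^2) * Real.sqrt (1 + (t / st m)^2)) := by
          apply mul_le_mul_of_nonneg_left hB3 (le_of_lt (Real.exp_pos _))
      _ = Real.exp ((s m / t)^2 - (1/2:ℝ)^(k-m)) * Real.sqrt (1 + (t / st m)^2) := by
          rw [← mul_assoc, ← Real.exp_add]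
          ring_nf
      _ ≤ 1 * Real.sqrt (1 + (t / st m)^2) := by
          apply mul_le_mul_of_nonneg_right _ hGnn
          rw [Real.exp_le_one_iff]
          linarith
      _ = Real.sqrt (1 + (t / st m)^2) := one_mul _
  have prodLower : ∏ m ∈ range (k+1),
      ((s m / st m) * Real.exp (-(1/2:ℝ)^(k-m)) * Real.sqrt (1 + (t / s m)^2)) ≤
      ∏ m ∈ range (k+1), Real.sqrt (1 + (t / st m)^2) := by
    apply Finset.prod_le_prod _ hfac
    intro m _
    have := hspos m; have := hstpos m
    positivity
  have hexp : ∏ m ∈ range (k+1), Real.exp (-(1/2:ℝ)^(k-m)) =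
      Real.exp (-(∑ m ∈ range (k+1), (1/2:ℝ)^(k-m))) := by
    rw [← Real.exp_sum]
    congr 1
    rw [← Finset.sum_neg_distrib]
  have hsum2 : ∑ m ∈ range (k+1), (1/2:ℝ)^(k-m) ≤ 2 := by
    have hrefl := Finset.sum_range_reflect (fun j => (1/2:ℝ)^j) (k+1)
    have : ∑ m ∈ range (k+1), (1/2:ℝ)^(k+1-1-m) = ∑ j ∈ range (k+1), (1/2:ℝ)^j := hrefl
    simp only [Nat.add_sub_cancel] at this
    rw [this]
    exact sum_geometric_two_le (k+1)
  have hexp2 : Real.exp (-2) ≤ ∏ m ∈ range (k+1), Real.exp (-(1/2:ℝ)^(k-m)) := by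
    rw [hexp]
    apply Real.exp_le_exp.mpr
    linarith
  have hdistrib : ∏ m ∈ range (k+1),
      ((s m / st m) * Real.exp (-(1/2:ℝ)^(k-m)) * Real.sqrt (1 + (t / s m)^2)) =
      (∏ m ∈ range (k+1), s m / st m) *
        (∏ m ∈ range (k+1), Real.exp (-(1/2:ℝ)^(k-m))) *
        ∏ m ∈ range (k+1), Real.sqrt (1 + (t / s m)^2) := by
    rw [← prod_mul_distrib, ← prod_mul_distrib]
  have hPnn : (0:ℝ) ≤ ∏ m ∈ range (k+1), s m / st m :=
    prod_nonneg (fun m _ => by have := hspos m; have := hstpos m; positivity)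
  have hFnn1 : (0:ℝ) ≤ ∏ m ∈ range (k+1), Real.sqrt (1 + (t / s m)^2) :=
    prod_nonneg (fun m _ => Real.sqrt_nonneg _)
  have hmain1 : Real.exp (-2) * (∏ m ∈ range (k+1), s m / st m) *
      ∏ m ∈ range (k+1), Real.sqrt (1 + (t / s m)^2) ≤
      ∏ m ∈ range (k+1), Real.sqrt (1 + (t / st m)^2) := by
    calc Real.exp (-2) * (∏ m ∈ range (k+1), s m / st m) *
        ∏ m ∈ range (k+1), Real.sqrt (1 + (t / s m)^2)
        ≤ (∏ m ∈ range (k+1), Real.exp (-(1/2:ℝ)^(k-m))) *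
            (∏ m ∈ range (k+1), s m / st m) *
            ∏ m ∈ range (k+1), Real.sqrt (1 + (t / s m)^2) := by
          apply mul_le_mul_of_nonneg_right _ hFnn1
          exact mul_le_mul_of_nonneg_right hexp2 hPnn
      _ = ∏ m ∈ range (k+1),
            ((s m / st m) * Real.exp (-(1/2:ℝ)^(k-m)) * Real.sqrt (1 + (t / s m)^2)) := by
          rw [hdistrib]; ring
      _ ≤ ∏ m ∈ range (k+1), Real.sqrt (1 + (t / st m)^2) := prodLower
  have hmain2 : ∏ m ∈ Ico (k+1) n, Real.sqrt (1 + (t / s m)^2) ≤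
      ∏ m ∈ Ico (k+1) n, Real.sqrt (1 + (t / st m)^2) := by
    apply Finset.prod_le_prod (fun m _ => Real.sqrt_nonneg _)
    intro m _
    have h1 : st m ≤ s m := by have := hints m; have := hstpos m; linarith
    exact auxB4 (hstpos m) h1
  calc Real.exp (-2) * (∏ m ∈ range (k+1), s m / st m) *
      ∏ m ∈ range n, Real.sqrt (1 + (t / s m)^2)
      = (Real.exp (-2) * (∏ m ∈ range (k+1), s m / st m) *
          ∏ m ∈ range (k+1), Real.sqrt (1 + (t / s m)^2)) *
          ∏ m ∈ Ico (k+1) n, Real.sqrt (1 + (t / s m)^2) := by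
        rw [← hsplitF]; ring
    _ ≤ (∏ m ∈ range (k+1), Real.sqrt (1 + (t / st m)^2)) *
          ∏ m ∈ Ico (k+1) n, Real.sqrt (1 + (t / st m)^2) := by
        apply mul_le_mul hmain1 hmain2
          (prod_nonneg (fun m _ => Real.sqrt_nonneg _))
          (prod_nonneg (fun m _ => Real.sqrt_nonneg _))
    _ = ∏ m ∈ range n, Real.sqrt (1 + (t / st m)^2) := hsplitG

lemma fin_upper2 (K n : ℕ) (hn : K + 2 ≤ n) {t : ℝ} (hK1 : s K ≤ t)
    (hK2 : t < s (K+1)) :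
    ∏ m ∈ range n, Real.sqrt (1 + (t / st m)^2) ≤
      6 / st 0 * t * ∏ m ∈ range n, Real.sqrt (1 + (t / s m)^2) := by
  have hst2 : ∀ j, 2 * st j ≤ st (j+1) := by
    intro j
    have h1 := hints j
    have h2 := hintst j
    have := hstpos j
    linarith
  have ht : 0 < t := lt_of_lt_of_le (hspos K) hK1
  have hn1 : K + 2 ≤ n := hn
  have hsplitG := prod_range_mul_prod_Ico
    (fun m => Real.sqrt (1 + (t / st m)^2)) hn1
  have hsplitF := prod_range_mul_prod_Ico
    (fun m => Real.sqrt (1 + (t / s m)^2)) hn1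
  -- head: range (K+2) = range (K+1) ++ {K+1}
  have bound1 : ∏ m ∈ range (K+1), Real.sqrt (1 + (t / st m)^2) ≤
      ((s K / st 0) * (1/10:ℝ)^K) *
        ∏ m ∈ range (K+1), Real.sqrt (1 + (t / s m)^2) := by
    have step : ∏ m ∈ range (K+1), Real.sqrt (1 + (t / st m)^2) ≤
        (∏ m ∈ range (K+1), s m / st m) *
          ∏ m ∈ range (K+1), Real.sqrt (1 + (t / s m)^2) := by
      rw [← prod_mul_distrib]
      apply Finset.prod_le_prod (fun m _ => Real.sqrt_nonneg _)
      intro m _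
      have h1 : st m ≤ s m := by have := hints m; have := hstpos m; linarith
      exact auxB1 (hstpos m) h1
    have htele := aux_tele s st hstpos hspos hintst K
    calc ∏ m ∈ range (K+1), Real.sqrt (1 + (t / st m)^2)
        ≤ (∏ m ∈ range (K+1), s m / st m) *
            ∏ m ∈ range (K+1), Real.sqrt (1 + (t / s m)^2) := step
      _ ≤ ((s K / st 0) * (1/10:ℝ)^K) *
            ∏ m ∈ range (K+1), Real.sqrt (1 + (t / s m)^2) := by
          apply mul_le_mul_of_nonneg_right htele
          exact prod_nonneg (fun m _ => Real.sqrt_nonneg _)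
  have bound2 : Real.sqrt (1 + (t / st (K+1))^2) ≤
      (1 + t / st (K+1)) * Real.sqrt (1 + (t / s (K+1))^2) :=
    auxB2 (hstpos (K+1)) (le_of_lt ht)
  have bound3 : ∏ m ∈ Ico (K+2) n, Real.sqrt (1 + (t / st m)^2) ≤
      3 * ∏ m ∈ Ico (K+2) n, Real.sqrt (1 + (t / s m)^2) := by
    have step : ∏ m ∈ Ico (K+2) n, Real.sqrt (1 + (t / st m)^2) ≤
        ∏ m ∈ Ico (K+2) n, ((1 + t / st m) * Real.sqrt (1 + (t / s m)^2)) := by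
      apply Finset.prod_le_prod (fun m _ => Real.sqrt_nonneg _)
      intro m _
      exact auxB2 (hstpos m) (le_of_lt ht)
    rw [prod_mul_distrib] at step
    have hta : 10 * t ≤ st (K+2) := by
      have := hintst (K+1)
      linarith
    have htail := aux_tail st hstpos hst2 ht (K+2) n hta
    have hFnn : (0:ℝ) ≤ ∏ m ∈ Ico (K+2) n, Real.sqrt (1 + (t / s m)^2) :=
      prod_nonneg (fun m _ => Real.sqrt_nonneg _)
    calc ∏ m ∈ Ico (K+2) n, Real.sqrt (1 + (t / st m)^2)
        ≤ (∏ m ∈ Ico (K+2) n, (1 + t / st m)) *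
            ∏ m ∈ Ico (K+2) n, Real.sqrt (1 + (t / s m)^2) := step
      _ ≤ 3 * ∏ m ∈ Ico (K+2) n, Real.sqrt (1 + (t / s m)^2) :=
          mul_le_mul_of_nonneg_right htail hFnn
  -- numeric combination
  have hnum : ((s K / st 0) * (1/10:ℝ)^K) * (1 + t / st (K+1)) * 3 ≤ 6 / st 0 * t := by
    have hst0 := hstpos 0
    have hsK := hspos K
    have hstK1 := hstpos (K+1)
    have h10 : 10 * s K ≤ st (K+1) := hintst K
    have hp1 : (1/10:ℝ)^K ≤ 1 := pow_le_one₀ (by norm_num) (by norm_num)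
    have hp0 : (0:ℝ) < (1/10:ℝ)^K := by positivity
    have hfrac : s K * (t / st (K+1)) ≤ t / 10 := by
      rw [mul_div_assoc' , div_le_div_iff₀ hstK1 (by norm_num)]
      nlinarith [mul_pos ht hsK]
    have key : s K * (1 + t / st (K+1)) ≤ 2 * t := by
      have : s K * (1 + t / st (K+1)) = s K + s K * (t / st (K+1)) := by ring
      rw [this]
      have h2 : t / 10 ≤ t := by linarith
      linarith
    have hnn : 0 ≤ 1 + t / st (K+1) := by positivity
    calc ((s K / st 0) * (1/10:ℝ)^K) * (1 + t / st (K+1)) * 3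
        ≤ ((s K / st 0) * 1) * (1 + t / st (K+1)) * 3 := by
          apply mul_le_mul_of_nonneg_right _ (by norm_num)
          apply mul_le_mul_of_nonneg_right _ hnn
          apply mul_le_mul_of_nonneg_left hp1 (by positivity)
      _ = (s K * (1 + t / st (K+1))) * 3 / st 0 := by ring
      _ ≤ (2 * t) * 3 / st 0 := by
          apply div_le_div_of_nonneg_right _ (le_of_lt hst0)
          exact mul_le_mul_of_nonneg_right key (by norm_num)
      _ = 6 / st 0 * t := by ring
  -- assemble
  have hG2 : ∏ m ∈ range (K+2), Real.sqrt (1 + (t / st m)^2) =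
      (∏ m ∈ range (K+1), Real.sqrt (1 + (t / st m)^2)) *
        Real.sqrt (1 + (t / st (K+1))^2) := prod_range_succ _ _
  have hF2 : ∏ m ∈ range (K+2), Real.sqrt (1 + (t / s m)^2) =
      (∏ m ∈ range (K+1), Real.sqrt (1 + (t / s m)^2)) *
        Real.sqrt (1 + (t / s (K+1))^2) := prod_range_succ _ _
  have hA : (0:ℝ) ≤ (s K / st 0) * (1/10:ℝ)^K := by
    have := hspos K; have := hstpos 0; positivity
  have hhead : ∏ m ∈ range (K+2), Real.sqrt (1 + (t / st m)^2) ≤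
      (((s K / st 0) * (1/10:ℝ)^K) * (1 + t / st (K+1))) *
        ∏ m ∈ range (K+2), Real.sqrt (1 + (t / s m)^2) := by
    rw [hG2, hF2]
    calc (∏ m ∈ range (K+1), Real.sqrt (1 + (t / st m)^2)) *
        Real.sqrt (1 + (t / st (K+1))^2)
        ≤ (((s K / st 0) * (1/10:ℝ)^K) *
            ∏ m ∈ range (K+1), Real.sqrt (1 + (t / s m)^2)) *
            ((1 + t / st (K+1)) * Real.sqrt (1 + (t / s (K+1))^2)) := by
          apply mul_le_mul bound1 bound2 (Real.sqrt_nonneg _)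
          exact mul_nonneg hA (prod_nonneg (fun m _ => Real.sqrt_nonneg _))
      _ = (((s K / st 0) * (1/10:ℝ)^K) * (1 + t / st (K+1))) *
            ((∏ m ∈ range (K+1), Real.sqrt (1 + (t / s m)^2)) *
              Real.sqrt (1 + (t / s (K+1))^2)) := by ring
  calc ∏ m ∈ range n, Real.sqrt (1 + (t / st m)^2)
      = (∏ m ∈ range (K+2), Real.sqrt (1 + (t / st m)^2)) *
          ∏ m ∈ Ico (K+2) n, Real.sqrt (1 + (t / st m)^2) := hsplitG.symm
    _ ≤ ((((s K / st 0) * (1/10:ℝ)^K) * (1 + t / st (K+1))) *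
          ∏ m ∈ range (K+2), Real.sqrt (1 + (t / s m)^2)) *
          (3 * ∏ m ∈ Ico (K+2) n, Real.sqrt (1 + (t / s m)^2)) := by
        apply mul_le_mul hhead bound3
          (prod_nonneg (fun m _ => Real.sqrt_nonneg _))
        apply mul_nonneg _ (prod_nonneg (fun m _ => Real.sqrt_nonneg _))
        apply mul_nonneg hA
          (by have := hstpos (K+1); positivity)
    _ = (((s K / st 0) * (1/10:ℝ)^K) * (1 + t / st (K+1)) * 3) *
          ((∏ m ∈ range (K+2), Real.sqrt (1 + (t / s m)^2)) *
            ∏ m ∈ Ico (K+2) n, Real.sqrt (1 + (t / s m)^2)) := by ring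
    _ ≤ (6 / st 0 * t) *
          ((∏ m ∈ range (K+2), Real.sqrt (1 + (t / s m)^2)) *
            ∏ m ∈ Ico (K+2) n, Real.sqrt (1 + (t / s m)^2)) := by
        apply mul_le_mul_of_nonneg_right hnum
        apply mul_nonneg (prod_nonneg (fun m _ => Real.sqrt_nonneg _))
          (prod_nonneg (fun m _ => Real.sqrt_nonneg _))
    _ = 6 / st 0 * t * ∏ m ∈ range n, Real.sqrt (1 + (t / s m)^2) := by rw [hsplitF]

end FinBounds

lemma aux_abs_tprod (u : ℕ → ℝ) (hu : ∀ k, 0 < u k) (hg : ∀ k, 2 * u k ≤ u (k+1)) (t : ℝ) :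
    ‖∏' k : ℕ, ((1:ℂ) - (t:ℂ) * Complex.I / (u k : ℂ))‖ =
      ∏' k : ℕ, Real.sqrt (1 + (t / u k)^2) := by
  rw [(aux_mult u hu hg t).norm_tprod]
  exact tprod_congr fun k => aux_absfac t (u k) (ne_of_gt (hu k))

lemma aux_mult_real (u : ℕ → ℝ) (hu : ∀ k, 0 < u k) (hg : ∀ k, 2 * u k ≤ u (k+1)) (t : ℝ) :
    Multipliable (fun k => Real.sqrt (1 + (t / u k)^2)) :=
  (aux_mult u hu hg t).norm.congr
    (fun k => aux_absfac t (u k) (ne_of_gt (hu k)))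

lemma aux_one_le_sqrt (x : ℝ) : 1 ≤ Real.sqrt (1 + x^2) := by
  have h : Real.sqrt 1 ≤ Real.sqrt (1 + x^2) :=
    Real.sqrt_le_sqrt (by nlinarith [sq_nonneg x])
  rwa [Real.sqrt_one] at h

lemma aux_one_le_tprod (u : ℕ → ℝ) (hu : ∀ k, 0 < u k) (hg : ∀ k, 2 * u k ≤ u (k+1)) (t : ℝ) :
    1 ≤ ∏' k : ℕ, Real.sqrt (1 + (t / u k)^2) := by
  apply ge_of_tendsto (aux_mult_real u hu hg t).hasProd.tendsto_prod_nat
  filter_upwards with n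
  calc (1:ℝ) = ∏ k ∈ range n, 1 := by simp
    _ ≤ ∏ k ∈ range n, Real.sqrt (1 + (t / u k)^2) :=
        Finset.prod_le_prod (fun _ _ => zero_le_one) (fun k _ => aux_one_le_sqrt _)

lemma tprod_le_mul (f g : ℕ → ℝ) (hf : Multipliable f) (hg : Multipliable g) (B : ℝ)
    (h : ∀ᶠ n in atTop, ∏ k ∈ range n, f k ≤ B * ∏ k ∈ range n, g k) :
    (∏' k, f k) ≤ B * ∏' k, g k :=
  le_of_tendsto_of_tendsto hf.hasProd.tendsto_prod_nat
    (hg.hasProd.tendsto_prod_nat.const_mul B) h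

lemma mul_tprod_le (f g : ℕ → ℝ) (hf : Multipliable f) (hg : Multipliable g) (B : ℝ)
    (h : ∀ᶠ n in atTop, B * ∏ k ∈ range n, f k ≤ ∏ k ∈ range n, g k) :
    B * (∏' k, f k) ≤ ∏' k, g k :=
  le_of_tendsto_of_tendsto (hf.hasProd.tendsto_prod_nat.const_mul B)
    hg.hasProd.tendsto_prod_nat h

/-- Comparison of two interlacing lacunary canonical products
`S₂(z) = ∏(1 - z/s_k)`, `G₁(z) = ∏(1 - z/s̃_k)` along the imaginary axis:
`|S₂(iy)| ≤ |G₁(iy)| ≲ |y S₂(iy)|`, and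
`|G₁(i s_k)/S₂(i s_k)| ≍ ∏_{m ≤ k} s_m/s̃_m`. -/
theorem stmt_18 (s st : ℕ → ℝ) (hst0 : 0 < st 0)
    (hints : ∀ k, 10 * st k ≤ s k) (hintst : ∀ k, 10 * s k ≤ st (k + 1))
    (S₂ G₁ : ℂ → ℂ)
    (hS₂ : ∀ z : ℂ, S₂ z = ∏' k : ℕ, (1 - z / (s k : ℂ)))
    (hG₁ : ∀ z : ℂ, G₁ z = ∏' k : ℕ, (1 - z / (st k : ℂ))) :
    (∀ y : ℝ, ‖S₂ ((y : ℂ) * Complex.I)‖ ≤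
        ‖G₁ ((y : ℂ) * Complex.I)‖)
    ∧ (∃ C > (0 : ℝ), ∃ Y : ℝ, ∀ y : ℝ, Y ≤ |y| →
        ‖G₁ ((y : ℂ) * Complex.I)‖ ≤
          C * |y| * ‖S₂ ((y : ℂ) * Complex.I)‖)
    ∧ (∃ c₁ > (0 : ℝ), ∃ c₂ > (0 : ℝ), ∀ k : ℕ,
        c₁ * ∏ m ∈ Finset.range (k + 1), s m / st m ≤
            ‖G₁ ((s k : ℂ) * Complex.I)‖ /
              ‖S₂ ((s k : ℂ) * Complex.I)‖
        ∧ ‖G₁ ((s k : ℂ) * Complex.I)‖ /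
              ‖S₂ ((s k : ℂ) * Complex.I)‖ ≤
            c₂ * ∏ m ∈ Finset.range (k + 1), s m / st m) := by
  have hstpos : ∀ k, 0 < st k := by
    intro k
    induction k with
    | zero => exact hst0
    | succ n ih =>
        have h1 := hints n
        have h2 := hintst n
        linarith
  have hspos : ∀ k, 0 < s k := fun k => by
    have := hints k; have := hstpos k; linarith
  have hs2 : ∀ j, 2 * s j ≤ s (j+1) := fun j => by
    have h1 := hintst j; have h2 := hints (j+1)
    have := hstpos (j+1); have := hspos j; linarith
  have hst2 : ∀ j, 2 * st j ≤ st (j+1) := fun j => by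
    have h1 := hints j; have h2 := hintst j; have := hstpos j; linarith
  have hstle : ∀ m, st m ≤ s m := fun m => by
    have := hints m; have := hstpos m; linarith
  have habsS : ∀ t : ℝ, ‖S₂ ((t:ℂ) * Complex.I)‖ =
      ∏' m : ℕ, Real.sqrt (1 + (t / s m)^2) := by
    intro t; rw [hS₂]; exact aux_abs_tprod s hspos hs2 t
  have habsG : ∀ t : ℝ, ‖G₁ ((t:ℂ) * Complex.I)‖ =
      ∏' m : ℕ, Real.sqrt (1 + (t / st m)^2) := by
    intro t; rw [hG₁]; exact aux_abs_tprod st hstpos hst2 t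
  have hmulF : ∀ t : ℝ, Multipliable (fun m => Real.sqrt (1 + (t / s m)^2)) :=
    aux_mult_real s hspos hs2
  have hmulG : ∀ t : ℝ, Multipliable (fun m => Real.sqrt (1 + (t / st m)^2)) :=
    aux_mult_real st hstpos hst2
  have hmono : ∀ a b : ℕ, a ≤ b → s a ≤ s b := by
    intro a b hab
    have h := aux_pow s hs2 a (b-a)
    rw [Nat.add_sub_cancel' hab] at h
    have h1 : (1:ℝ) * s a ≤ 2^(b-a) * s a :=
      mul_le_mul_of_nonneg_right (one_le_pow₀ (by norm_num)) (le_of_lt (hspos a))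
    linarith
  refine ⟨?_, ?_, ?_⟩
  · -- Part 1
    intro y
    rw [habsS, habsG]
    have h := tprod_le_mul _ _ (hmulF y) (hmulG y) 1 ?_
    · simpa using h
    · filter_upwards with n
      rw [one_mul]
      exact Finset.prod_le_prod (fun m _ => Real.sqrt_nonneg _)
        (fun m _ => auxB4 (hstpos m) (hstle m))
  · -- Part 2
    refine ⟨6 / st 0, div_pos (by norm_num) hst0, s 0, ?_⟩
    intro y hy
    rw [habsS, habsG]
    have h1 : (∏' m : ℕ, Real.sqrt (1 + (y / s m)^2)) =
        ∏' m : ℕ, Real.sqrt (1 + (|y| / s m)^2) :=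
      tprod_congr fun m => by rw [div_pow, div_pow, _root_.sq_abs]
    have h2 : (∏' m : ℕ, Real.sqrt (1 + (y / st m)^2)) =
        ∏' m : ℕ, Real.sqrt (1 + (|y| / st m)^2) :=
      tprod_congr fun m => by rw [div_pow, div_pow, _root_.sq_abs]
    rw [h1, h2]
    set T := |y| with hTdef
    have hT0 : 0 < T := lt_of_lt_of_le (hspos 0) hy
    obtain ⟨M, hM⟩ := pow_unbounded_of_one_lt (T / s 0) (one_lt_two)
    have hsM : T < s M := by
      have hp := aux_pow s hs2 0 M
      simp only [Nat.zero_add] at hp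
      have h3 : T < 2^M * s 0 := by
        rw [div_lt_iff₀ (hspos 0)] at hM
        linarith
      linarith
    set K := Nat.findGreatest (fun k => s k ≤ T) M with hKdef
    have hK1 : s K ≤ T :=
      Nat.findGreatest_spec (P := fun k => s k ≤ T) (m := 0) (Nat.zero_le M) hy
    have hK2 : T < s (K+1) := by
      by_cases h : K + 1 ≤ M
      · have hgr := Nat.findGreatest_is_greatest
          (P := fun k => s k ≤ T) (n := M) (k := K+1) (Nat.lt_succ_self K) h
        exact lt_of_not_ge hgr
      · push_neg at h
        have hMK : M ≤ K + 1 := le_of_lt h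
        have := hmono M (K+1) hMK
        linarith
    exact tprod_le_mul _ _ (hmulG T) (hmulF T) (6 / st 0 * T)
      (by filter_upwards [eventually_ge_atTop (K+2)] with n hn
          exact fin_upper2 hstpos hspos hints hintst K n hn hK1 hK2)
  · -- Part 3
    refine ⟨Real.exp (-2), Real.exp_pos _, 3, by norm_num, ?_⟩
    intro k
    have hX : (1:ℝ) ≤ ∏' m : ℕ, Real.sqrt (1 + (s k / s m)^2) :=
      aux_one_le_tprod s hspos hs2 (s k)
    have hXpos : (0:ℝ) < ∏' m : ℕ, Real.sqrt (1 + (s k / s m)^2) :=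
      lt_of_lt_of_le one_pos hX
    rw [habsS, habsG]
    constructor
    · rw [le_div_iff₀ hXpos]
      exact mul_tprod_le _ _ (hmulF (s k)) (hmulG (s k))
        (Real.exp (-2) * ∏ m ∈ range (k+1), s m / st m)
        (by filter_upwards [eventually_ge_atTop (k+1)] with n hn
            exact fin_lower3 hstpos hspos hints hintst k n hn)
    · rw [div_le_iff₀ hXpos]
      exact tprod_le_mul _ _ (hmulG (s k)) (hmulF (s k))
        (3 * ∏ m ∈ range (k+1), s m / st m)
        (by filter_upwards [eventually_ge_atTop (k+1)] with n hn
            exact fin_upper3 hstpos hspos hints hintst k n hn)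
end

section
/- Let (t_n)_{n≥1} be positive reals with t_{n+1} ≥ 2 t_n, let (μ_n) be positive weights, and define Ω_1 = {z : |z| ≤ (t_1+t_2)/2}, Ω_n = {z : (t_{n−1}+t_n)/2 < |z| ≤ (t_n+t_{n+1})/2}. Then for z ∈ Ω_n one has |∏_{k}(1 − z/t_k)| ≍ (|z|^{n−1} / ∏_{k=1}^{n−1} t_k) · |z − t_n|/t_n, with implicit constants depending only on the lacunarity constant. -/
open Finset Filter Topology


lemma aux_prod_one_sub_ge (a : ℕ → ℝ) (s : Finset ℕ) (h0 : ∀ k ∈ s, 0 ≤ a k)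
    (h1 : ∀ k ∈ s, a k ≤ 1) : 1 - ∑ k ∈ s, a k ≤ ∏ k ∈ s, (1 - a k) := by
  classical
  induction s using Finset.cons_induction with
  | empty => simp
  | cons j s hj ih =>
    rw [Finset.prod_cons, Finset.sum_cons]
    have h0' : ∀ k ∈ s, 0 ≤ a k := fun k hk => h0 k (Finset.mem_cons_of_mem hk)
    have h1' : ∀ k ∈ s, a k ≤ 1 := fun k hk => h1 k (Finset.mem_cons_of_mem hk)
    have hS : 0 ≤ ∑ k ∈ s, a k := Finset.sum_nonneg h0'
    have haj0 : 0 ≤ a j := h0 j (Finset.mem_cons_self _ _)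
    have haj1 : a j ≤ 1 := h1 j (Finset.mem_cons_self _ _)
    have hih := ih h0' h1'
    nlinarith [mul_le_mul_of_nonneg_left hih (by linarith : (0:ℝ) ≤ 1 - a j)]

lemma aux_lower (a : ℕ → ℝ) (m : ℕ) (h0 : ∀ k < m, 0 ≤ a k)
    (ha : ∀ k < m, a k ≤ 3/4 * (1/2)^k) :
    (1:ℝ)/16 ≤ ∏ k ∈ Finset.range m, (1 - a k) := by
  rcases Nat.eq_zero_or_pos m with hm | hm
  · subst hm; norm_num
  obtain ⟨j, rfl⟩ : ∃ j, m = j + 1 := ⟨m - 1, (Nat.succ_pred_eq_of_pos hm).symm⟩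
  rw [Finset.prod_range_succ']
  have key : (1:ℝ)/4 ≤ ∏ i ∈ Finset.range j, (1 - a (i + 1)) := by
    have hsum : ∑ i ∈ Finset.range j, a (i + 1) ≤ 3/4 := by
      calc ∑ i ∈ Finset.range j, a (i + 1)
          ≤ ∑ i ∈ Finset.range j, 3/8 * (1/2)^i := by
            apply Finset.sum_le_sum
            intro i hi
            have := ha (i + 1) (by simpa using Nat.succ_lt_succ (Finset.mem_range.mp hi))
            calc a (i+1) ≤ 3/4 * (1/2)^(i+1) := this
              _ = 3/8 * (1/2)^i := by ring
        _ = 3/8 * ∑ i ∈ Finset.range j, (1/2)^i := by rw [Finset.mul_sum]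
        _ ≤ 3/8 * 2 := by
            have := sum_geometric_two_le j
            nlinarith
        _ = 3/4 := by norm_num
    have := aux_prod_one_sub_ge (fun i => a (i + 1)) (Finset.range j)
      (fun k hk => h0 (k+1) (by simpa using Nat.succ_lt_succ (Finset.mem_range.mp hk)))
      (fun k hk => by
        have := ha (k + 1) (by simpa using Nat.succ_lt_succ (Finset.mem_range.mp hk))
        have h2 : (3:ℝ)/4 * (1/2)^(k+1) ≤ 3/4 := by
          have : ((1:ℝ)/2)^(k+1) ≤ 1 := pow_le_one₀ (by norm_num) (by norm_num)
          nlinarith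
        linarith)
    linarith
  have ha0 : a 0 ≤ 3/4 := by
    have := ha 0 (Nat.succ_pos j); simpa using this
  have h04 : (1:ℝ)/4 ≤ 1 - a 0 := by linarith
  calc (1:ℝ)/16 = (1/4) * (1/4) := by norm_num
    _ ≤ (∏ i ∈ Finset.range j, (1 - a (i + 1))) * (1 - a 0) := by
        apply mul_le_mul key h04 (by norm_num) (le_trans (by norm_num) key)

lemma aux_upper (a : ℕ → ℝ) (m : ℕ) (h0 : ∀ k < m, 0 ≤ a k)
    (ha : ∀ k < m, a k ≤ 3/4 * (1/2)^k) :
    ∏ k ∈ Finset.range m, (1 + a k) ≤ Real.exp (3/2) := by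
  have hsum : ∑ k ∈ Finset.range m, a k ≤ 3/2 := by
    calc ∑ k ∈ Finset.range m, a k ≤ ∑ k ∈ Finset.range m, 3/4 * (1/2)^k :=
          Finset.sum_le_sum (fun k hk => ha k (Finset.mem_range.mp hk))
      _ = 3/4 * ∑ k ∈ Finset.range m, (1/2)^k := by rw [Finset.mul_sum]
      _ ≤ 3/4 * 2 := by have := sum_geometric_two_le m; nlinarith
      _ = 3/2 := by norm_num
  calc ∏ k ∈ Finset.range m, (1 + a k) ≤ ∏ k ∈ Finset.range m, Real.exp (a k) := by
        apply Finset.prod_le_prod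
        · intro k hk; have := h0 k (Finset.mem_range.mp hk); linarith
        · intro k hk; linarith [Real.add_one_le_exp (a k)]
    _ = Real.exp (∑ k ∈ Finset.range m, a k) := (Real.exp_sum _ _).symm
    _ ≤ Real.exp (3/2) := Real.exp_le_exp.mpr hsum


lemma aux_t_pos (t : ℕ → ℝ) (h0 : 0 < t 0) (hlac : ∀ k, 2 * t k ≤ t (k + 1)) :
    ∀ k, 0 < t k := by
  intro k
  induction k with
  | zero => exact h0
  | succ k ih => linarith [hlac k]

lemma aux_t_grow (t : ℕ → ℝ) (h0 : 0 < t 0) (hlac : ∀ k, 2 * t k ≤ t (k + 1)) :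
    ∀ i d, 2 ^ d * t i ≤ t (i + d) := by
  intro i d
  induction d with
  | zero => simp
  | succ d ih =>
      have h1 := hlac (i + d)
      have ht := aux_t_pos t h0 hlac i
      calc 2 ^ (d+1) * t i = 2 * (2 ^ d * t i) := by ring
        _ ≤ 2 * t (i + d) := by linarith
        _ ≤ t (i + d + 1) := h1
        _ = t (i + (d + 1)) := by ring_nf

lemma aux_mult_s19 (t : ℕ → ℝ) (h0 : 0 < t 0) (hlac : ∀ k, 2 * t k ≤ t (k + 1)) (z : ℂ) :
    Multipliable (fun k : ℕ => 1 - z / (t k : ℂ)) := by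
  have ht := aux_t_pos t h0 hlac
  by_cases hz : ∃ n, z = (t n : ℂ)
  · obtain ⟨n, rfl⟩ := hz
    refine ⟨0, ?_⟩
    have hev : (fun s : Finset ℕ => ∏ i ∈ s, (1 - (t n : ℂ) / (t i : ℂ)))
        =ᶠ[atTop] (fun _ => 0) := by
      filter_upwards [eventually_ge_atTop ({n} : Finset ℕ)] with s hs
      apply Finset.prod_eq_zero (hs (Finset.mem_singleton_self n))
      rw [div_self (by exact_mod_cast (ht n).ne')]
      ring
    exact Filter.Tendsto.congr' hev.symm tendsto_const_nhds
  · push_neg at hz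
    -- all factors nonzero
    have hfn : ∀ k : ℕ, (1 : ℂ) - z / (t k : ℂ) ≠ 0 := by
      intro k h
      apply hz k
      have htk : (t k : ℂ) ≠ 0 := by exact_mod_cast (ht k).ne'
      field_simp at h
      linear_combination -h
    -- find N with 2‖z‖ ≤ t N
    obtain ⟨N, hN⟩ : ∃ N, 2 * ‖z‖ < 2 ^ N * t 0 := by
      obtain ⟨N, hN⟩ := pow_unbounded_of_one_lt (2 * ‖z‖ / t 0) (by norm_num : (1:ℝ) < 2)
      exact ⟨N, by rw [div_lt_iff₀ h0] at hN; linarith [hN]⟩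
    have hN' : 2 * ‖z‖ ≤ t N := by
      have := aux_t_grow t h0 hlac 0 N
      simpa using le_trans hN.le (by simpa using this)
    have hlog : Summable (fun k : ℕ => Complex.log (1 - z / (t k : ℂ))) := by
      rw [← summable_nat_add_iff N]
      apply Summable.of_norm_bounded (g := fun j : ℕ => 3/4 * (1/2)^j)
      · exact (summable_geometric_of_lt_one (by norm_num) (by norm_num)).mul_left _
      · intro j
        have htj : 2 ^ j * t N ≤ t (j + N) := by
          have := aux_t_grow t h0 hlac N j
          rwa [Nat.add_comm N j] at this
        have htpos := ht (j + N)
        have habs : ‖-(z / ((t (j + N) : ℝ) : ℂ))‖ ≤ 1/2 * (1/2)^j := by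
          rw [norm_neg, norm_div, Complex.norm_real, Real.norm_eq_abs, abs_of_pos htpos]
          rw [div_le_iff₀ htpos]
          have h2 : ‖z‖ ≤ t N / 2 := by linarith
          have hp : (0:ℝ) < 2 ^ j := by positivity
          calc ‖z‖ ≤ t N / 2 := h2
            _ ≤ (2 ^ j * t N) * ((1/2) * (1/2)^j) := by
                rw [show (2 ^ j * t N) * ((1/2) * (1/2)^j) = t N / 2 * (2^j * (1/2)^j) by ring]
                rw [← mul_pow]
                norm_num
            _ ≤ t (j + N) * (1/2 * (1/2)^j) :=
                mul_le_mul_of_nonneg_right htj (by positivity)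
            _ = 1/2 * (1/2)^j * t (j + N) := by ring
        have h12 : ‖-(z / ((t (j + N) : ℝ) : ℂ))‖ ≤ 1/2 := by
          refine le_trans habs ?_
          have : ((1:ℝ)/2)^j ≤ 1 := pow_le_one₀ (by norm_num) (by norm_num)
          nlinarith
        have := Complex.norm_log_one_add_half_le_self (z := -(z / ((t (j + N) : ℝ) : ℂ)))
          (by simpa using h12)
        have heq : (1 : ℂ) + -(z / ((t (j + N) : ℝ) : ℂ)) = 1 - z / ((t (j + N) : ℝ) : ℂ) := by ring
        rw [heq] at this
        refine le_trans this ?_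
        nlinarith [habs]
    have := Complex.multipliable_of_summable_log hlog
    exact this

/-- Two-sided estimate of a lacunary canonical product `A(z) = ∏ (1 - z/t_k)` on the
annulus `Ω_n` around `t_n`:
`|A(z)| ≍ (|z|ⁿ / ∏_{k<n} t_k) · |z - t_n| / t_n`. -/
theorem stmt_19 (t : ℕ → ℝ) (h0 : 0 < t 0) (hlac : ∀ k, 2 * t k ≤ t (k + 1)) :
    ∃ c₁ > (0 : ℝ), ∃ c₂ > (0 : ℝ), ∀ (n : ℕ) (z : ℂ),
      ((n = 0 ∧ ‖z‖ ≤ (t 0 + t 1) / 2) ∨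
        (1 ≤ n ∧ (t (n - 1) + t n) / 2 < ‖z‖ ∧
          ‖z‖ ≤ (t n + t (n + 1)) / 2)) →
      c₁ * ((‖z‖ ^ n / ∏ k ∈ Finset.range n, t k) *
            ‖z - (t n : ℂ)‖ / t n)
          ≤ ‖∏' k : ℕ, (1 - z / (t k : ℂ))‖
      ∧ ‖∏' k : ℕ, (1 - z / (t k : ℂ))‖
          ≤ c₂ * ((‖z‖ ^ n / ∏ k ∈ Finset.range n, t k) *
            ‖z - (t n : ℂ)‖ / t n) := by
  have ht := aux_t_pos t h0 hlac
  have hgrow := aux_t_grow t h0 hlac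
  refine ⟨1/256, by norm_num, Real.exp 3, Real.exp_pos 3, ?_⟩
  intro n z hΩ
  set r := ‖z‖ with hr
  have hr0 : 0 ≤ r := norm_nonneg z
  set P : ℝ := r ^ n / ∏ k ∈ Finset.range n, t k with hPdef
  have hP0 : 0 ≤ P := by
    apply div_nonneg (by positivity)
    exact Finset.prod_nonneg (fun k _ => (ht k).le)
  have habs : ∀ k, ‖1 - z / (t k : ℂ)‖ = ‖z - (t k : ℂ)‖ / t k := by
    intro k
    have htk : ((t k : ℝ) : ℂ) ≠ 0 := by exact_mod_cast (ht k).ne'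
    rw [show (1 : ℂ) - z / (t k : ℂ) = ((t k : ℂ) - z) / (t k : ℂ) by field_simp]
    rw [norm_div, Complex.norm_real, Real.norm_eq_abs, abs_of_pos (ht k), norm_sub_rev]
  have habs' : ∀ k, ‖z / (t k : ℂ)‖ = r / t k := by
    intro k
    rw [norm_div, Complex.norm_real, Real.norm_eq_abs, abs_of_pos (ht k)]
  -- upper bound for |z|
  have hz_up : r ≤ 3/4 * t (n + 1) := by
    rcases hΩ with ⟨hn0, hb⟩ | ⟨hn1, hlo, hup⟩
    · subst hn0; have := hlac 0; norm_num at this ⊢; linarith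
    · have := hlac n; linarith
  -- bound for the head product (k < n)
  have hB1 : 1/16 * P ≤ (∏ k ∈ Finset.range n, (‖z - (t k : ℂ)‖ / t k))
      ∧ (∏ k ∈ Finset.range n, (‖z - (t k : ℂ)‖ / t k)) ≤ Real.exp (3/2) * P := by
    rcases hΩ with ⟨hn0, _⟩ | ⟨hn1, hlo, _⟩
    · subst hn0
      simp only [Finset.range_zero, Finset.prod_empty, pow_zero, hPdef]
      norm_num [Real.one_le_exp_iff]
    · obtain ⟨n', rfl⟩ : ∃ n', n = n' + 1 := ⟨n - 1, (Nat.succ_pred_eq_of_pos hn1).symm⟩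
      simp only [Nat.add_sub_cancel] at hlo
      have hrpos : 0 < r := lt_of_le_of_lt (by have := ht n'; have := ht (n'+1); linarith) hlo
      have hr32 : 3/2 * t n' ≤ r := by have := hlac n'; linarith
      have hkey : ∀ j, j ≤ n' → t (n' - j) / r ≤ 3/4 * (1/2) ^ j := by
        intro j hj
        have hg := hgrow (n' - j) j
        rw [Nat.sub_add_cancel hj] at hg
        have hp : (0:ℝ) < 2 ^ j := by positivity
        rw [div_le_iff₀ hrpos]
        have h1 : ((1:ℝ)/2) ^ j = 1 / 2 ^ j := by rw [div_pow, one_pow]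
        rw [h1, show (3:ℝ)/4 * (1 / 2 ^ j) * r = 3/4 * r / 2 ^ j by ring, le_div_iff₀ hp]
        nlinarith [ht (n' - j), ht n']
      have htle : ∀ k, k ≤ n' → t k ≤ r := by
        intro k hk
        have hg := hgrow k (n' - k)
        rw [Nat.add_sub_cancel' hk] at hg
        have h2 : (1:ℝ) ≤ 2 ^ (n' - k) := one_le_pow₀ (by norm_num)
        nlinarith [ht k, ht n']
      have hreflect : ∀ g : ℕ → ℝ,
          ∏ j ∈ Finset.range (n' + 1), g (n' - j) = ∏ j ∈ Finset.range (n' + 1), g j := by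
        intro g
        have := Finset.prod_range_reflect g (n' + 1)
        simpa using this
      have hPprod : P = ∏ k ∈ Finset.range (n' + 1), (r / t k) := by
        rw [hPdef, Finset.prod_div_distrib, Finset.prod_const, Finset.card_range]
      have hsub : ∀ k, r - t k ≤ ‖z - (t k : ℂ)‖ := by
        intro k
        have h := norm_sub_norm_le z ((t k : ℝ) : ℂ)
        rwa [Complex.norm_real, Real.norm_eq_abs, abs_of_pos (ht k)] at h
      have hadd : ∀ k, ‖z - (t k : ℂ)‖ ≤ r + t k := by
        intro k
        have h := norm_sub_le z ((t k : ℝ) : ℂ)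
        rwa [Complex.norm_real, Real.norm_eq_abs, abs_of_pos (ht k)] at h
      constructor
      · have hlow16 : (1:ℝ)/16 ≤ ∏ k ∈ Finset.range (n' + 1), (1 - t k / r) := by
          rw [← hreflect (fun k => 1 - t k / r)]
          exact aux_lower (fun j => t (n' - j) / r) (n' + 1)
            (fun j _ => div_nonneg (ht _).le hrpos.le)
            (fun j hjlt => hkey j (Nat.lt_succ_iff.mp hjlt))
        calc 1/16 * P ≤ (∏ k ∈ Finset.range (n' + 1), (1 - t k / r)) * P :=
              mul_le_mul_of_nonneg_right hlow16 hP0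
          _ = ∏ k ∈ Finset.range (n' + 1), ((r - t k) / t k) := by
              rw [hPprod, ← Finset.prod_mul_distrib]
              apply Finset.prod_congr rfl
              intro k hk
              field_simp
          _ ≤ ∏ k ∈ Finset.range (n' + 1), (‖z - (t k : ℂ)‖ / t k) := by
              apply Finset.prod_le_prod
              · intro k hk
                have h1 := htle k (Nat.lt_succ_iff.mp (Finset.mem_range.mp hk))
                exact div_nonneg (by linarith) (ht k).le
              · intro k hk
                exact div_le_div_of_nonneg_right (hsub k) (ht k).le
      · have hup16 : ∏ k ∈ Finset.range (n' + 1), (1 + t k / r) ≤ Real.exp (3/2) := by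
          rw [← hreflect (fun k => 1 + t k / r)]
          exact aux_upper (fun j => t (n' - j) / r) (n' + 1)
            (fun j _ => div_nonneg (ht _).le hrpos.le)
            (fun j hjlt => hkey j (Nat.lt_succ_iff.mp hjlt))
        calc ∏ k ∈ Finset.range (n' + 1), (‖z - (t k : ℂ)‖ / t k)
            ≤ ∏ k ∈ Finset.range (n' + 1), ((r + t k) / t k) := by
              apply Finset.prod_le_prod
              · intro k hk
                exact div_nonneg (norm_nonneg _) (ht k).le
              · intro k hk
                exact div_le_div_of_nonneg_right (hadd k) (ht k).le
          _ = (∏ k ∈ Finset.range (n' + 1), (1 + t k / r)) * P := by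
              rw [hPprod, ← Finset.prod_mul_distrib]
              apply Finset.prod_congr rfl
              intro k hk
              field_simp
          _ ≤ Real.exp (3/2) * P := mul_le_mul_of_nonneg_right hup16 hP0
  -- bound for the tail product (k > n)
  have hb3 : ∀ j : ℕ, r / t (n + 1 + j) ≤ 3/4 * (1/2) ^ j := by
    intro j
    have hg := hgrow (n + 1) j
    have hp : (0:ℝ) < 2 ^ j := by positivity
    rw [div_le_iff₀ (ht _)]
    have h1 : ((1:ℝ)/2) ^ j = 1 / 2 ^ j := by rw [div_pow, one_pow]
    rw [h1]
    have h2 : 3/4 * (1 / 2 ^ j) * (2 ^ j * t (n + 1)) = 3/4 * t (n + 1) := by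
      field_simp
    have h3 := mul_le_mul_of_nonneg_left hg (by positivity : (0:ℝ) ≤ 3/4 * (1/2^j))
    linarith [hz_up]
  have hB3 : ∀ m : ℕ,
      1/16 ≤ (∏ k ∈ Finset.Ico (n+1) m, ‖1 - z / (t k : ℂ)‖)
      ∧ (∏ k ∈ Finset.Ico (n+1) m, ‖1 - z / (t k : ℂ)‖) ≤ Real.exp (3/2) := by
    intro m
    rw [Finset.prod_Ico_eq_prod_range]
    have hlow : ∀ j : ℕ, 1 - r / t (n + 1 + j) ≤ ‖1 - z / (t (n + 1 + j) : ℂ)‖ := by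
      intro j
      have h := norm_sub_norm_le 1 (z / (t (n + 1 + j) : ℂ))
      rw [norm_one, habs'] at h
      exact h
    have hupb : ∀ j : ℕ, ‖1 - z / (t (n + 1 + j) : ℂ)‖ ≤ 1 + r / t (n + 1 + j) := by
      intro j
      have h := norm_sub_le 1 (z / (t (n + 1 + j) : ℂ))
      rwa [norm_one, habs'] at h
    constructor
    · calc (1:ℝ)/16 ≤ ∏ j ∈ Finset.range (m - (n+1)), (1 - r / t (n + 1 + j)) :=
            aux_lower _ _ (fun j _ => div_nonneg hr0 (ht _).le) (fun j _ => hb3 j)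
        _ ≤ ∏ j ∈ Finset.range (m - (n+1)), ‖1 - z / (t (n + 1 + j) : ℂ)‖ := by
            apply Finset.prod_le_prod
            · intro j _
              have := hb3 j
              have hj1 : ((1:ℝ)/2) ^ j ≤ 1 := pow_le_one₀ (by norm_num) (by norm_num)
              nlinarith
            · intro j _
              exact hlow j
    · calc ∏ j ∈ Finset.range (m - (n+1)), ‖1 - z / (t (n + 1 + j) : ℂ)‖
          ≤ ∏ j ∈ Finset.range (m - (n+1)), (1 + r / t (n + 1 + j)) :=
            Finset.prod_le_prod (fun j _ => norm_nonneg _) (fun j _ => hupb j)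
        _ ≤ Real.exp (3/2) := aux_upper _ _ (fun j _ => div_nonneg hr0 (ht _).le) (fun j _ => hb3 j)
  -- combine: bound partial products for m ≥ n + 1
  set Q : ℝ := ‖z - (t n : ℂ)‖ / t n with hQdef
  have hQ0 : 0 ≤ Q := div_nonneg (norm_nonneg _) (ht n).le
  have hpartial : ∀ m : ℕ, n + 1 ≤ m →
      1/256 * (P * Q) ≤ (∏ k ∈ Finset.range m, ‖1 - z / (t k : ℂ)‖)
      ∧ (∏ k ∈ Finset.range m, ‖1 - z / (t k : ℂ)‖) ≤ Real.exp 3 * (P * Q) := by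
    intro m hm
    have hsplit : (∏ k ∈ Finset.range m, ‖1 - z / (t k : ℂ)‖)
        = (∏ k ∈ Finset.range n, (‖z - (t k : ℂ)‖ / t k)) * Q
          * (∏ k ∈ Finset.Ico (n+1) m, ‖1 - z / (t k : ℂ)‖) := by
      rw [← Finset.prod_range_mul_prod_Ico _ hm, Finset.prod_range_succ]
      congr 1
      · rw [habs n]
        congr 1
        apply Finset.prod_congr rfl
        intro k _
        exact habs k
    have hB1lo := hB1.1
    have hB1up := hB1.2
    have hB3lo := (hB3 m).1
    have hB3up := (hB3 m).2
    have hhead0 : 0 ≤ ∏ k ∈ Finset.range n, (‖z - (t k : ℂ)‖ / t k) :=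
      Finset.prod_nonneg (fun k _ => div_nonneg (norm_nonneg _) (ht k).le)
    constructor
    · rw [hsplit]
      calc 1/256 * (P * Q) = (1/16 * P) * Q * (1/16) := by ring
        _ ≤ (∏ k ∈ Finset.range n, (‖z - (t k : ℂ)‖ / t k)) * Q
            * (∏ k ∈ Finset.Ico (n+1) m, ‖1 - z / (t k : ℂ)‖) := by
            apply mul_le_mul (mul_le_mul_of_nonneg_right hB1lo hQ0) hB3lo (by norm_num)
            exact mul_nonneg hhead0 hQ0
    · rw [hsplit]
      calc (∏ k ∈ Finset.range n, (‖z - (t k : ℂ)‖ / t k)) * Q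
            * (∏ k ∈ Finset.Ico (n+1) m, ‖1 - z / (t k : ℂ)‖)
          ≤ (Real.exp (3/2) * P) * Q * Real.exp (3/2) := by
            apply mul_le_mul (mul_le_mul_of_nonneg_right hB1up hQ0) hB3up
            · exact Finset.prod_nonneg (fun k _ => norm_nonneg _)
            · positivity
        _ = Real.exp 3 * (P * Q) := by
            rw [show (3:ℝ) = 3/2 + 3/2 by norm_num, Real.exp_add]
            ring
  -- pass to the limit
  have hmul := aux_mult_s19 t h0 hlac z
  have htend : Tendsto (fun m => ∏ k ∈ Finset.range m, ‖1 - z / (t k : ℂ)‖)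
      atTop (𝓝 (‖∏' k : ℕ, (1 - z / (t k : ℂ))‖)) := by
    have h1 := hmul.hasProd.tendsto_prod_nat
    have h2 := (continuous_norm.tendsto _).comp h1
    simpa [Function.comp_def, norm_prod] using h2
  have hgoal : (‖z‖ ^ n / ∏ k ∈ Finset.range n, t k) *
      ‖z - (t n : ℂ)‖ / t n = P * Q := by
    rw [hPdef, hQdef, ← hr, mul_div_assoc]
  rw [hgoal]
  constructor
  · exact ge_of_tendsto htend (eventually_atTop.2 ⟨n + 1, fun m hm => (hpartial m hm).1⟩)
  · exact le_of_tendsto htend (eventually_atTop.2 ⟨n + 1, fun m hm => (hpartial m hm).2⟩)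
end
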